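/- arXiv:0903.0070 — 3 statements merged into one kernel-verified Lean document; each statement's English description precedes it below -/
import Mathlib

section
/- Under hypotheses (H1) and (H3), every point a ∈ Γ₊ with a ∉ {a(1,0), a(0,1)} has an open neighborhood U ⊂ ℝ² such that for every a' ∈ U and every z ∈ ℕ*×ℕ*, the quantity E_z(exp(a'·S(τ)); τ < ∞) is finite. -/
open scoped ENNReal Classical
open Filter

namespace KRWQ

/-- `n`-step transition probabilities of the homogeneous random walk with step
distribution `μ` on an abelian group `G`: `nstep μ n z z' = P_z(S(n) = z')`. -/
noncomputable def nstep {G : Type*} [AddCommGroup G] (μ : G → ℝ≥0∞) : ℕ → G → G → ℝ≥0∞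
  | 0, z, z' => if z' = z then 1 else 0
  | n + 1, z, z' => ∑' w : G, nstep μ n z w * μ (z' - w)

/-- `n`-step transition probabilities of the random walk killed outside the set `A`:
for `z ∈ A`, `nstepK μ A n z z' = P_z(S(n) = z', S(k) ∈ A for all k ≤ n)`. -/
noncomputable def nstepK {G : Type*} [AddCommGroup G] (μ : G → ℝ≥0∞) (A : Set G) :
    ℕ → G → G → ℝ≥0∞
  | 0, z, z' => if z' = z then 1 else 0
  | n + 1, z, z' => A.indicator (fun u => ∑' w : G, nstepK μ A n z w * μ (u - w)) z'

/-- Green function of the homogeneous random walk. -/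
noncomputable def green {G : Type*} [AddCommGroup G] (μ : G → ℝ≥0∞) (z z' : G) : ℝ≥0∞ :=
  ∑' n : ℕ, nstep μ n z z'

/-- Green function of the random walk killed outside `A`. -/
noncomputable def greenK {G : Type*} [AddCommGroup G] (μ : G → ℝ≥0∞) (A : Set G)
    (z z' : G) : ℝ≥0∞ :=
  ∑' n : ℕ, nstepK μ A n z z'

/-- Distribution of the exit position: for `z ∈ A`, `exitK μ A z w` is the probability
that the walk started at `z` first exits `A` (in finite time) at the point `w`,
i.e. `P_z(τ < ∞, S(τ) = w)` where `τ = inf{n ≥ 0 : S(n) ∉ A}`. -/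
noncomputable def exitK {G : Type*} [AddCommGroup G] (μ : G → ℝ≥0∞) (A : Set G)
    (z w : G) : ℝ≥0∞ :=
  Aᶜ.indicator (fun u => ∑' n : ℕ, ∑' v : G, nstepK μ A n z v * μ (u - v)) w

/-- `Eexit μ A z f = E_z(f(S(τ)); τ < ∞)` for a nonnegative `f`,
where `τ` is the first exit time from `A` and `z ∈ A`. -/
noncomputable def Eexit {G : Type*} [AddCommGroup G] (μ : G → ℝ≥0∞) (A : Set G) (z : G)
    (f : G → ℝ≥0∞) : ℝ≥0∞ :=
  ∑' w : G, exitK μ A z w * f w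

/-- `EexitR μ A z f = E_z(f(S(τ)); τ < ∞)` for a signed `f` (real-valued version). -/
noncomputable def EexitR {G : Type*} [AddCommGroup G] (μ : G → ℝ≥0∞) (A : Set G) (z : G)
    (f : G → ℝ) : ℝ :=
  ∑' w : G, (exitK μ A z w).toReal * f w

/-- Euclidean scalar product on `ℝ²`. -/
def dot (a b : ℝ × ℝ) : ℝ := a.1 * b.1 + a.2 * b.2

/-- Embedding of the lattice `ℤ²` into `ℝ²`. -/
def toR (z : ℤ × ℤ) : ℝ × ℝ := ((z.1 : ℝ), (z.2 : ℝ))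

/-- Euclidean norm on `ℝ²`. -/
noncomputable def norE (p : ℝ × ℝ) : ℝ := Real.sqrt (p.1 ^ 2 + p.2 ^ 2)

/-- Euclidean norm of a lattice point. -/
noncomputable def normZ (z : ℤ × ℤ) : ℝ := norE (toR z)

/-- The open quadrant `ℕ* × ℕ*`. -/
def quadrant : Set (ℤ × ℤ) := {z | 0 < z.1 ∧ 0 < z.2}

/-- The half plane `ℤ × ℕ*` (state space of the local process `Z¹₊`). -/
def upperHalf : Set (ℤ × ℤ) := {z | 0 < z.2}

/-- The half plane `ℕ* × ℤ` (state space of the local process `Z²₊`). -/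
def rightHalf : Set (ℤ × ℤ) := {z | 0 < z.1}

/-- The jump generating function `φ(a) = ∑_z μ(z) exp(a·z)`. -/
noncomputable def jumpGF (μ : ℤ × ℤ → ℝ≥0∞) (a : ℝ × ℝ) : ℝ≥0∞ :=
  ∑' z : ℤ × ℤ, μ z * ENNReal.ofReal (Real.exp (dot a (toR z)))

/-- Hypothesis (H1): the homogeneous random walk `S` with step distribution `μ`
is irreducible, and its mean `m = ∑_z z μ(z)` exists and is nonzero. -/
def H1 (μ : ℤ × ℤ → ℝ≥0∞) : Prop :=
  (∀ z z' : ℤ × ℤ, ∃ n : ℕ, 0 < nstep μ n z z') ∧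
    Summable (fun z : ℤ × ℤ => ((z.1 : ℝ)) * (μ z).toReal) ∧
    Summable (fun z : ℤ × ℤ => ((z.2 : ℝ)) * (μ z).toReal) ∧
    ((∑' z : ℤ × ℤ, ((z.1 : ℝ)) * (μ z).toReal, ∑' z : ℤ × ℤ, ((z.2 : ℝ)) * (μ z).toReal)
      ≠ ((0 : ℝ), (0 : ℝ)))

/-- Hypothesis (H2): the random walk killed outside the quadrant is irreducible
on the quadrant. -/
def H2 (μ : ℤ × ℤ → ℝ≥0∞) : Prop :=
  ∀ z ∈ quadrant, ∀ z' ∈ quadrant, ∃ n : ℕ, 0 < nstepK μ quadrant n z z'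

/-- Hypothesis (H3): the jump generating function is finite everywhere on `ℝ²`. -/
def H3 (μ : ℤ × ℤ → ℝ≥0∞) : Prop := ∀ a : ℝ × ℝ, jumpGF μ a < ⊤

/-- `d` is a greatest common divisor of the set `K` of natural numbers. -/
def IsGcdOfSet (K : Set ℕ) (d : ℕ) : Prop :=
  (∀ k ∈ K, d ∣ k) ∧ ∀ c : ℕ, (∀ k ∈ K, c ∣ k) → c ∣ d

/-- First marginal of `μ`: step distribution of the coordinate walk `S₁`. -/
noncomputable def marg1 (μ : ℤ × ℤ → ℝ≥0∞) : ℤ → ℝ≥0∞ := fun x => ∑' y : ℤ, μ (x, y)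

/-- Second marginal of `μ`: step distribution of the coordinate walk `S₂`. -/
noncomputable def marg2 (μ : ℤ × ℤ → ℝ≥0∞) : ℤ → ℝ≥0∞ := fun y => ∑' x : ℤ, μ (x, y)

/-- Hypothesis (H4): the coordinate random walks `S₁` and `S₂` are aperiodic on `ℤ`. -/
def H4 (μ : ℤ × ℤ → ℝ≥0∞) : Prop :=
  IsGcdOfSet {k : ℕ | 0 < k ∧ 0 < nstep (marg1 μ) k (0 : ℤ) 0} 1 ∧
    IsGcdOfSet {k : ℕ | 0 < k ∧ 0 < nstep (marg2 μ) k (0 : ℤ) 0} 1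

/-- The set `𝒮²₊` of unit vectors of `ℝ²` with nonnegative coordinates. -/
def Spos : Set (ℝ × ℝ) := {q | 0 ≤ q.1 ∧ 0 ≤ q.2 ∧ norE q = 1}

/-- `aOf` is the map `q ↦ a(q)`, the inverse of the homeomorphism
`a ↦ ∇φ(a)/|∇φ(a)|` from `∂D` onto the unit circle (extended to all nonzero `q` by
homogeneity).  Equivalently, `a(q)` is the unique point of `D = {a : φ(a) ≤ 1}` where
the linear functional `a ↦ a·q` attains its maximum over `D`, and it lies on `∂D`. -/
def IsDirMap (μ : ℤ × ℤ → ℝ≥0∞) (aOf : ℝ × ℝ → ℝ × ℝ) : Prop :=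
  ∀ q : ℝ × ℝ, q ≠ 0 →
    jumpGF μ (aOf q) = 1 ∧
      ∀ a : ℝ × ℝ, jumpGF μ a ≤ 1 → a ≠ aOf q → dot a q < dot (aOf q) q

/-- The arc `Γ₊ = {a ∈ ∂D : q(a) ∈ 𝒮²₊}`. -/
def GammaPlus (aOf : ℝ × ℝ → ℝ × ℝ) : Set (ℝ × ℝ) := {a | ∃ q ∈ Spos, a = aOf q}

/-- The integrand appearing in the boundary term of `h_a`. -/
noncomputable def haIntegrand (aOf : ℝ × ℝ → ℝ × ℝ) (a : ℝ × ℝ) (w : ℤ × ℤ) : ℝ :=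
  if a = aOf ((0 : ℝ), (1 : ℝ)) then (w.1 : ℝ) * Real.exp (dot a (toR w))
  else if a = aOf ((1 : ℝ), (0 : ℝ)) then (w.2 : ℝ) * Real.exp (dot a (toR w))
  else Real.exp (dot a (toR w))

/-- The leading term of `h_a`. -/
noncomputable def haLead (aOf : ℝ × ℝ → ℝ × ℝ) (a : ℝ × ℝ) (z : ℤ × ℤ) : ℝ :=
  if a = aOf ((0 : ℝ), (1 : ℝ)) then (z.1 : ℝ) * Real.exp (dot a (toR z))
  else if a = aOf ((1 : ℝ), (0 : ℝ)) then (z.2 : ℝ) * Real.exp (dot a (toR z))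
  else Real.exp (dot a (toR z))

/-- The harmonic function `h_a` of the killed random walk, defined by (1.3). -/
noncomputable def haFun (μ : ℤ × ℤ → ℝ≥0∞) (aOf : ℝ × ℝ → ℝ × ℝ) (a : ℝ × ℝ)
    (z : ℤ × ℤ) : ℝ :=
  haLead aOf a z - EexitR μ quadrant z (haIntegrand aOf a)

/-- Expectation over the event `{τ = τ₁ < τ₂}`, i.e. the walk exits the quadrant
through the boundary `{w : w₁ ≤ 0, w₂ > 0}`. -/
noncomputable def Eexit1 (μ : ℤ × ℤ → ℝ≥0∞) (z : ℤ × ℤ) (f : ℤ × ℤ → ℝ≥0∞) : ℝ≥0∞ :=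
  ∑' w : ℤ × ℤ, (if w.1 ≤ 0 ∧ 0 < w.2 then exitK μ quadrant z w * f w else 0)

/-- The support function `w ↦ a(w)·w = max_{a ∈ D} a·w`, with the convention that it
vanishes at `w = 0`. -/
noncomputable def support (aOf : ℝ × ℝ → ℝ × ℝ) (w : ℝ × ℝ) : ℝ :=
  if w = 0 then 0 else dot (aOf w) w

/-- The function `λ_ε(q,w) = a(w)·w + a(q-w)·(q-w) - ε|w|`. -/
noncomputable def lamEps (aOf : ℝ × ℝ → ℝ × ℝ) (ε : ℝ) (q w : ℝ × ℝ) : ℝ :=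
  support aOf w + support aOf (q - w) - ε * norE w

/-- The principal part `Ξ^q_δ(z,zₙ)` of the renewal equation. -/
noncomputable def XiQ (μ : ℤ × ℤ → ℝ≥0∞) (q : ℝ × ℝ) (δ : ℝ) (z zn : ℤ × ℤ) : ℝ :=
  if q = ((1 : ℝ), (0 : ℝ)) then
    (greenK μ upperHalf z zn).toReal -
      ∑' w : ℤ × ℤ, (exitK μ quadrant z w).toReal *
        (if w.1 ≤ 0 ∧ 0 < w.2 ∧ normZ w < δ * normZ zn then
          (greenK μ upperHalf w zn).toReal else 0)
  else if q = ((0 : ℝ), (1 : ℝ)) then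
    (greenK μ rightHalf z zn).toReal -
      ∑' w : ℤ × ℤ, (exitK μ quadrant z w).toReal *
        (if w.2 ≤ 0 ∧ 0 < w.1 ∧ normZ w < δ * normZ zn then
          (greenK μ rightHalf w zn).toReal else 0)
  else
    (green μ z zn).toReal -
      ∑' w : ℤ × ℤ, (exitK μ quadrant z w).toReal *
        (if normZ w < δ * normZ zn then (green μ w zn).toReal else 0)


/-! ### Auxiliary lemmas -/

lemma dot_toR_sub (b : ℝ × ℝ) (u v : ℤ × ℤ) :
    dot b (toR u) = dot b (toR v) + dot b (toR (u - v)) := by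
  simp only [dot, toR, Prod.fst_sub, Prod.snd_sub]
  push_cast
  ring

/-- Superharmonicity of `w ↦ exp(b·w)` when `φ(b) ≤ 1`. -/
lemma expE_superharm (μ : ℤ × ℤ → ℝ≥0∞) (b : ℝ × ℝ) (hb : jumpGF μ b ≤ 1) (v : ℤ × ℤ) :
    ∑' u : ℤ × ℤ, μ (u - v) * ENNReal.ofReal (Real.exp (dot b (toR u)))
      ≤ ENNReal.ofReal (Real.exp (dot b (toR v))) := by
  have key : ∀ u : ℤ × ℤ, μ (u - v) * ENNReal.ofReal (Real.exp (dot b (toR u)))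
      = ENNReal.ofReal (Real.exp (dot b (toR v))) *
        (μ (u - v) * ENNReal.ofReal (Real.exp (dot b (toR (u - v))))) := by
    intro u
    rw [dot_toR_sub b u v, Real.exp_add, ENNReal.ofReal_mul (Real.exp_nonneg _)]
    ring
  calc ∑' u : ℤ × ℤ, μ (u - v) * ENNReal.ofReal (Real.exp (dot b (toR u)))
      = ENNReal.ofReal (Real.exp (dot b (toR v))) *
        ∑' u : ℤ × ℤ, μ (u - v) * ENNReal.ofReal (Real.exp (dot b (toR (u - v)))) := by
        rw [← ENNReal.tsum_mul_left]; exact tsum_congr key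
    _ = ENNReal.ofReal (Real.exp (dot b (toR v))) * jumpGF μ b := by
        congr 1
        exact (Equiv.subRight v).tsum_eq
          (fun w => μ w * ENNReal.ofReal (Real.exp (dot b (toR w))))
    _ ≤ ENNReal.ofReal (Real.exp (dot b (toR v))) * 1 := mul_le_mul_right hb _
    _ = _ := mul_one _

/-- Optional-stopping bound: for `b ∈ D`, `E_z(exp(b·S(τ)); τ < ∞) ≤ exp(b·z)`. -/
lemma eexit_exp_le (μ : ℤ × ℤ → ℝ≥0∞) (A : Set (ℤ × ℤ)) (b : ℝ × ℝ)
    (hb : jumpGF μ b ≤ 1) (z : ℤ × ℤ) :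
    Eexit μ A z (fun w => ENNReal.ofReal (Real.exp (dot b (toR w))))
      ≤ ENNReal.ofReal (Real.exp (dot b (toR z))) := by
  set e : ℤ × ℤ → ℝ≥0∞ := fun w => ENNReal.ofReal (Real.exp (dot b (toR w))) with he
  set F : ℕ → ℝ≥0∞ := fun n => ∑' w : ℤ × ℤ, nstepK μ A n z w * e w with hF
  set G : ℕ → ℝ≥0∞ := fun n =>
    ∑' u : ℤ × ℤ, Aᶜ.indicator (fun u => ∑' v : ℤ × ℤ, nstepK μ A n z v * μ (u - v)) u * e u
    with hG
  have hstep : ∀ n, F (n + 1) + G n ≤ F n := by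
    intro n
    set T : ℤ × ℤ → ℝ≥0∞ := fun u => ∑' v : ℤ × ℤ, nstepK μ A n z v * μ (u - v) with hT
    have h1 : F (n + 1) + G n = ∑' u : ℤ × ℤ, T u * e u := by
      have : F (n + 1) = ∑' u : ℤ × ℤ, A.indicator T u * e u := rfl
      rw [this, hG, ← ENNReal.tsum_add]
      refine tsum_congr fun u => ?_
      by_cases hu : u ∈ A
      · simp [Set.indicator_of_mem hu, Set.indicator_of_notMem (by simpa using hu : u ∉ Aᶜ)]
      · simp [Set.indicator_of_notMem hu, Set.indicator_of_mem (by simpa using hu : u ∈ Aᶜ)]; rfl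
    rw [h1]
    calc ∑' u : ℤ × ℤ, T u * e u
        = ∑' u : ℤ × ℤ, ∑' v : ℤ × ℤ, nstepK μ A n z v * (μ (u - v) * e u) := by
          refine tsum_congr fun u => ?_
          rw [hT]
          rw [← ENNReal.tsum_mul_right]
          exact tsum_congr fun v => by ring
      _ = ∑' v : ℤ × ℤ, ∑' u : ℤ × ℤ, nstepK μ A n z v * (μ (u - v) * e u) := ENNReal.tsum_comm
      _ = ∑' v : ℤ × ℤ, nstepK μ A n z v * ∑' u : ℤ × ℤ, μ (u - v) * e u := by
          exact tsum_congr fun v => ENNReal.tsum_mul_left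
      _ ≤ ∑' v : ℤ × ℤ, nstepK μ A n z v * e v :=
          ENNReal.tsum_le_tsum fun v => mul_le_mul_right (expE_superharm μ b hb v) _
      _ = F n := rfl
  have hF0 : F 0 = e z := by
    show ∑' w : ℤ × ℤ, nstepK μ A 0 z w * e w = e z
    have : ∀ w : ℤ × ℤ, w ≠ z → nstepK μ A 0 z w * e w = 0 := by
      intro w hw; simp [nstepK, hw]
    rw [tsum_eq_single z this]
    simp [nstepK]
  have hFn : ∀ n, F n + ∑ k ∈ Finset.range n, G k ≤ e z := by
    intro n
    induction n with
    | zero => simp [hF0]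
    | succ n ih =>
        calc F (n + 1) + ∑ k ∈ Finset.range (n + 1), G k
            = (F (n + 1) + G n) + ∑ k ∈ Finset.range n, G k := by
              rw [Finset.sum_range_succ]; ring
          _ ≤ F n + ∑ k ∈ Finset.range n, G k := add_le_add_left (hstep n) _
          _ ≤ e z := ih
  have hEe : Eexit μ A z e = ∑' n : ℕ, G n := by
    rw [Eexit]
    have h2 : ∀ w : ℤ × ℤ, exitK μ A z w * e w
        = ∑' n : ℕ, Aᶜ.indicator (fun u => ∑' v : ℤ × ℤ, nstepK μ A n z v * μ (u - v)) w
            * e w := by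
      intro w
      rw [exitK]
      by_cases hw : w ∈ Aᶜ
      · simp only [Set.indicator_of_mem hw]
        rw [← ENNReal.tsum_mul_right]
      · simp [Set.indicator_of_notMem hw]
    calc ∑' w : ℤ × ℤ, exitK μ A z w * e w
        = ∑' w : ℤ × ℤ, ∑' n : ℕ,
            Aᶜ.indicator (fun u => ∑' v : ℤ × ℤ, nstepK μ A n z v * μ (u - v)) w * e w :=
          tsum_congr h2
      _ = ∑' n : ℕ, G n := ENNReal.tsum_comm
  rw [hEe]
  rw [ENNReal.tsum_eq_iSup_sum]
  refine iSup_le fun s => ?_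
  obtain ⟨n, hn⟩ := s.exists_nat_subset_range
  calc ∑ k ∈ s, G k ≤ ∑ k ∈ Finset.range n, G k := Finset.sum_le_sum_of_subset hn
    _ ≤ F n + ∑ k ∈ Finset.range n, G k := le_add_self
    _ ≤ e z := hFn n

/-- Convexity of the sublevel set `D = {φ ≤ 1}`. -/
lemma jumpGF_combo_le (μ : ℤ × ℤ → ℝ≥0∞) (x y : ℝ × ℝ) (s : ℝ) (h0 : 0 ≤ s) (h1 : s ≤ 1)
    (hx : jumpGF μ x ≤ 1) (hy : jumpGF μ y ≤ 1) :
    jumpGF μ ((1 - s) * x.1 + s * y.1, (1 - s) * x.2 + s * y.2) ≤ 1 := by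
  have hdot : ∀ w : ℝ × ℝ, dot ((1 - s) * x.1 + s * y.1, (1 - s) * x.2 + s * y.2) w
      = (1 - s) * dot x w + s * dot y w := by
    intro w; simp only [dot]; ring
  have hterm : ∀ z : ℤ × ℤ,
      μ z * ENNReal.ofReal (Real.exp (dot ((1 - s) * x.1 + s * y.1,
        (1 - s) * x.2 + s * y.2) (toR z)))
      ≤ ENNReal.ofReal (1 - s) * (μ z * ENNReal.ofReal (Real.exp (dot x (toR z))))
        + ENNReal.ofReal s * (μ z * ENNReal.ofReal (Real.exp (dot y (toR z)))) := by
    intro z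
    have hcx := convexOn_exp.2 (Set.mem_univ (dot x (toR z))) (Set.mem_univ (dot y (toR z)))
      (by linarith : (0:ℝ) ≤ 1 - s) h0 (by ring)
    simp only [smul_eq_mul] at hcx
    rw [hdot]
    calc μ z * ENNReal.ofReal (Real.exp ((1 - s) * dot x (toR z) + s * dot y (toR z)))
        ≤ μ z * ENNReal.ofReal ((1 - s) * Real.exp (dot x (toR z))
            + s * Real.exp (dot y (toR z))) :=
          mul_le_mul_right (ENNReal.ofReal_le_ofReal hcx) _
      _ = ENNReal.ofReal (1 - s) * (μ z * ENNReal.ofReal (Real.exp (dot x (toR z))))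
          + ENNReal.ofReal s * (μ z * ENNReal.ofReal (Real.exp (dot y (toR z)))) := by
          rw [ENNReal.ofReal_add (mul_nonneg (by linarith) (Real.exp_nonneg _)) (mul_nonneg h0 (Real.exp_nonneg _)),
            ENNReal.ofReal_mul (by linarith), ENNReal.ofReal_mul h0]
          ring
  calc jumpGF μ ((1 - s) * x.1 + s * y.1, (1 - s) * x.2 + s * y.2)
      ≤ ∑' z : ℤ × ℤ, (ENNReal.ofReal (1 - s) * (μ z * ENNReal.ofReal (Real.exp (dot x (toR z))))
          + ENNReal.ofReal s * (μ z * ENNReal.ofReal (Real.exp (dot y (toR z))))) :=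
        ENNReal.tsum_le_tsum hterm
    _ = ENNReal.ofReal (1 - s) * jumpGF μ x + ENNReal.ofReal s * jumpGF μ y := by
        rw [ENNReal.tsum_add, ENNReal.tsum_mul_left, ENNReal.tsum_mul_left]; rfl
    _ ≤ ENNReal.ofReal (1 - s) * 1 + ENNReal.ofReal s * 1 := by
        exact add_le_add (mul_le_mul_right hx _) (mul_le_mul_right hy _)
    _ = 1 := by
        rw [mul_one, mul_one, ← ENNReal.ofReal_add (by linarith) h0]
        norm_num

/-- **Proposition 3.2.**  Under (H1) and (H3), every noncritical point `a` of `Γ₊`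
(i.e. `a ∉ {a(1,0), a(0,1)}`) has an open neighborhood on which the functions
`a' ↦ E_z(exp(a'·S(τ)); τ < ∞)` are finite for all `z ∈ ℕ*×ℕ*`. -/
theorem finiteness_near_noncritical_points
    (μ : ℤ × ℤ → ℝ≥0∞) (hprob : ∑' z : ℤ × ℤ, μ z = 1)
    (h1 : H1 μ) (h3 : H3 μ)
    (aOf : ℝ × ℝ → ℝ × ℝ) (haOf : IsDirMap μ aOf)
    (a : ℝ × ℝ) (ha : a ∈ GammaPlus aOf)
    (ha1 : a ≠ aOf ((1 : ℝ), (0 : ℝ))) (ha2 : a ≠ aOf ((0 : ℝ), (1 : ℝ))) :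
    ∃ U : Set (ℝ × ℝ), IsOpen U ∧ a ∈ U ∧
      ∀ a' ∈ U, ∀ z ∈ quadrant,
        Eexit μ quadrant z (fun w => ENNReal.ofReal (Real.exp (dot a' (toR w)))) < ⊤ := by
  obtain ⟨q, ⟨hq1, hq2, hqn⟩, haq⟩ := ha
  have hqne : q ≠ 0 := by
    intro h; rw [h] at hqn; simp [norE] at hqn
  -- both coordinates of q are positive
  have hq1pos : 0 < q.1 := by
    rcases lt_or_eq_of_le hq1 with h | h
    · exact h
    · exfalso
      have hq21 : q.2 = 1 := by
        have : Real.sqrt (q.1 ^ 2 + q.2 ^ 2) = 1 := hqn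
        rw [← h] at this
        simpa [Real.sqrt_sq hq2] using this
      have hq01 : q = ((0 : ℝ), (1 : ℝ)) := Prod.ext_iff.2 ⟨h.symm, hq21⟩
      exact ha2 (by rw [haq, hq01])
  have hq2pos : 0 < q.2 := by
    rcases lt_or_eq_of_le hq2 with h | h
    · exact h
    · exfalso
      have hq11 : q.1 = 1 := by
        have : Real.sqrt (q.1 ^ 2 + q.2 ^ 2) = 1 := hqn
        rw [← h] at this
        simpa [Real.sqrt_sq hq1] using this
      have hq10 : q = ((1 : ℝ), (0 : ℝ)) := Prod.ext_iff.2 ⟨hq11, h.symm⟩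
      exact ha1 (by rw [haq, hq10])
  obtain ⟨hφa, hstrict⟩ := haOf q hqne
  rw [← haq] at hφa hstrict
  set T := aOf ((0 : ℝ), (1 : ℝ)) with hT
  set B := aOf ((0 : ℝ), (-1 : ℝ)) with hB
  set L := aOf ((-1 : ℝ), (0 : ℝ)) with hL
  set R := aOf ((1 : ℝ), (0 : ℝ)) with hR
  obtain ⟨hφT, hTmax⟩ := haOf ((0 : ℝ), (1 : ℝ)) (by simp [Prod.ext_iff])
  obtain ⟨hφB, hBmax⟩ := haOf ((0 : ℝ), (-1 : ℝ)) (by simp [Prod.ext_iff])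
  obtain ⟨hφL, hLmax⟩ := haOf ((-1 : ℝ), (0 : ℝ)) (by simp [Prod.ext_iff])
  obtain ⟨hφR, hRmax⟩ := haOf ((1 : ℝ), (0 : ℝ)) (by simp [Prod.ext_iff])
  rw [← hT] at hφT hTmax
  rw [← hB] at hφB hBmax
  rw [← hL] at hφL hLmax
  rw [← hR] at hφR hRmax
  -- a is not the minimizer of the second coordinate
  have hane_B : a ≠ B := by
    intro h
    have h1 : dot a ((1 : ℝ), (0 : ℝ)) < dot R ((1 : ℝ), (0 : ℝ)) := hRmax a hφa.le ha1
    have h2 : dot R ((0 : ℝ), (-1 : ℝ)) < dot B ((0 : ℝ), (-1 : ℝ)) :=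
      hBmax R hφR.le (by rw [← h]; exact ha1.symm)
    have h3 : dot R q < dot a q := hstrict R hφR.le ha1.symm
    rw [h] at h1 h3
    simp only [dot] at h1 h2 h3
    have e1 : B.1 < R.1 := by linarith
    have e2 : B.2 < R.2 := by linarith
    have p1 : q.1 * B.1 < q.1 * R.1 := mul_lt_mul_of_pos_left e1 hq1pos
    have p2 : q.2 * B.2 < q.2 * R.2 := mul_lt_mul_of_pos_left e2 hq2pos
    linarith
  have hane_L : a ≠ L := by
    intro h
    have h1 : dot a ((0 : ℝ), (1 : ℝ)) < dot T ((0 : ℝ), (1 : ℝ)) := hTmax a hφa.le ha2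
    have h2 : dot T ((-1 : ℝ), (0 : ℝ)) < dot L ((-1 : ℝ), (0 : ℝ)) :=
      hLmax T hφT.le (by rw [← h]; exact ha2.symm)
    have h3 : dot T q < dot a q := hstrict T hφT.le ha2.symm
    rw [h] at h1 h3
    simp only [dot] at h1 h2 h3
    have e1 : L.2 < T.2 := by linarith
    have e2 : L.1 < T.1 := by linarith
    have p1 : q.1 * L.1 < q.1 * T.1 := mul_lt_mul_of_pos_left e2 hq1pos
    have p2 : q.2 * L.2 < q.2 * T.2 := mul_lt_mul_of_pos_left e1 hq2pos
    linarith
  -- coordinate separations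
  have hB2 : B.2 < a.2 := by
    have := hBmax a hφa.le hane_B
    simp only [dot] at this; linarith
  have hT2 : a.2 < T.2 := by
    have := hTmax a hφa.le ha2
    simp only [dot] at this; linarith
  have hL1 : L.1 < a.1 := by
    have := hLmax a hφa.le hane_L
    simp only [dot] at this; linarith
  have hR1 : a.1 < R.1 := by
    have := hRmax a hφa.le ha1
    simp only [dot] at this; linarith
  have hTB : (0 : ℝ) < T.2 - B.2 := by linarith
  have hRL : (0 : ℝ) < R.1 - L.1 := by linarith
  have hdBa : dot B q < dot a q := hstrict B hφB.le hane_B.symm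
  have hdTa : dot T q < dot a q := hstrict T hφT.le ha2.symm
  have hdLa : dot L q < dot a q := hstrict L hφL.le hane_L.symm
  have hdRa : dot R q < dot a q := hstrict R hφR.le ha1.symm
  -- the chord point at height a.2 lies strictly left of a
  have hdB' : B.1 * q.1 + B.2 * q.2 < a.1 * q.1 + a.2 * q.2 := by
    simpa only [dot] using hdBa
  have hdT' : T.1 * q.1 + T.2 * q.2 < a.1 * q.1 + a.2 * q.2 := by
    simpa only [dot] using hdTa
  have hdL' : L.1 * q.1 + L.2 * q.2 < a.1 * q.1 + a.2 * q.2 := by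
    simpa only [dot] using hdLa
  have hdR' : R.1 * q.1 + R.2 * q.2 < a.1 * q.1 + a.2 * q.2 := by
    simpa only [dot] using hdRa
  have hm : B.1 + (a.2 - B.2) * ((T.1 - B.1) / (T.2 - B.2)) < a.1 := by
    set s : ℝ := (a.2 - B.2) / (T.2 - B.2) with hs
    have hs0 : 0 < s := div_pos (by linarith) hTB
    have hs1 : s < 1 := (div_lt_one hTB).2 (by linarith)
    have hm2 : (1 - s) * B.2 + s * T.2 = a.2 := by
      have h' : s * (T.2 - B.2) = a.2 - B.2 := div_mul_cancel₀ _ hTB.ne'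
      linarith [h']
    have p1 := mul_lt_mul_of_pos_left hdB' (by linarith : (0:ℝ) < 1 - s)
    have p2 := mul_lt_mul_of_pos_left hdT' hs0
    have hcomb : ((1 - s) * B.1 + s * T.1) * q.1 + ((1 - s) * B.2 + s * T.2) * q.2
        < a.1 * q.1 + a.2 * q.2 := by nlinarith [p1, p2]
    rw [hm2] at hcomb
    have h4 : ((1 - s) * B.1 + s * T.1) * q.1 < a.1 * q.1 := by linarith
    have h5 : (1 - s) * B.1 + s * T.1 < a.1 := lt_of_mul_lt_mul_right h4 hq1pos.le
    calc B.1 + (a.2 - B.2) * ((T.1 - B.1) / (T.2 - B.2))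
        = (1 - s) * B.1 + s * T.1 := by rw [hs]; ring
      _ < a.1 := h5
  have hn : L.2 + (a.1 - L.1) * ((R.2 - L.2) / (R.1 - L.1)) < a.2 := by
    set s : ℝ := (a.1 - L.1) / (R.1 - L.1) with hs
    have hs0 : 0 < s := div_pos (by linarith) hRL
    have hs1 : s < 1 := (div_lt_one hRL).2 (by linarith)
    have hm1 : (1 - s) * L.1 + s * R.1 = a.1 := by
      have h' : s * (R.1 - L.1) = a.1 - L.1 := div_mul_cancel₀ _ hRL.ne'
      linarith [h']
    have p1 := mul_lt_mul_of_pos_left hdL' (by linarith : (0:ℝ) < 1 - s)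
    have p2 := mul_lt_mul_of_pos_left hdR' hs0
    have hcomb : ((1 - s) * L.1 + s * R.1) * q.1 + ((1 - s) * L.2 + s * R.2) * q.2
        < a.1 * q.1 + a.2 * q.2 := by nlinarith [p1, p2]
    rw [hm1] at hcomb
    have h4 : ((1 - s) * L.2 + s * R.2) * q.2 < a.2 * q.2 := by linarith
    have h5 : (1 - s) * L.2 + s * R.2 < a.2 := lt_of_mul_lt_mul_right h4 hq2pos.le
    calc L.2 + (a.1 - L.1) * ((R.2 - L.2) / (R.1 - L.1))
        = (1 - s) * L.2 + s * R.2 := by rw [hs]; ring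
      _ < a.2 := h5
  -- the open neighborhood
  refine ⟨{p : ℝ × ℝ | B.2 < p.2 ∧ p.2 < T.2 ∧
      B.1 + (p.2 - B.2) * ((T.1 - B.1) / (T.2 - B.2)) < p.1 ∧
      L.1 < p.1 ∧ p.1 < R.1 ∧
      L.2 + (p.1 - L.1) * ((R.2 - L.2) / (R.1 - L.1)) < p.2}, ?_, ?_, ?_⟩
  · simp only [Set.setOf_and]
    refine IsOpen.inter (isOpen_lt continuous_const continuous_snd)
      (IsOpen.inter (isOpen_lt continuous_snd continuous_const)
      (IsOpen.inter (isOpen_lt (by fun_prop) continuous_fst)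
      (IsOpen.inter (isOpen_lt continuous_const continuous_fst)
      (IsOpen.inter (isOpen_lt continuous_fst continuous_const)
      (isOpen_lt (by fun_prop) continuous_snd)))))
  · exact ⟨hB2, hT2, hm, hL1, hR1, hn⟩
  · rintro a' ⟨hu1, hu2, hu3, hu4, hu5, hu6⟩ z hz
    -- construct b ∈ D with b.2 = a'.2 and b.1 ≤ a'.1
    set s : ℝ := (a'.2 - B.2) / (T.2 - B.2) with hs
    have hs0 : 0 ≤ s := div_nonneg (by linarith) hTB.le
    have hs1 : s ≤ 1 := (div_le_one hTB).2 (by linarith)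
    set b : ℝ × ℝ := ((1 - s) * B.1 + s * T.1, (1 - s) * B.2 + s * T.2) with hbdef
    have hφb : jumpGF μ b ≤ 1 := jumpGF_combo_le μ B T s hs0 hs1 hφB.le hφT.le
    have hb2 : b.2 = a'.2 := by
      show (1 - s) * B.2 + s * T.2 = a'.2
      have h' : s * (T.2 - B.2) = a'.2 - B.2 := div_mul_cancel₀ _ hTB.ne'
      linarith [h']
    have hb1 : b.1 ≤ a'.1 := by
      show (1 - s) * B.1 + s * T.1 ≤ a'.1
      have : (1 - s) * B.1 + s * T.1 = B.1 + (a'.2 - B.2) * ((T.1 - B.1) / (T.2 - B.2)) := by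
        rw [hs]; ring
      rw [this]; exact hu3.le
    -- construct c ∈ D with c.1 = a'.1 and c.2 ≤ a'.2
    set t : ℝ := (a'.1 - L.1) / (R.1 - L.1) with ht
    have ht0 : 0 ≤ t := div_nonneg (by linarith) hRL.le
    have ht1 : t ≤ 1 := (div_le_one hRL).2 (by linarith)
    set c : ℝ × ℝ := ((1 - t) * L.1 + t * R.1, (1 - t) * L.2 + t * R.2) with hcdef
    have hφc : jumpGF μ c ≤ 1 := jumpGF_combo_le μ L R t ht0 ht1 hφL.le hφR.le
    have hc1 : c.1 = a'.1 := by
      show (1 - t) * L.1 + t * R.1 = a'.1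
      have h' : t * (R.1 - L.1) = a'.1 - L.1 := div_mul_cancel₀ _ hRL.ne'
      linarith [h']
    have hc2 : c.2 ≤ a'.2 := by
      show (1 - t) * L.2 + t * R.2 ≤ a'.2
      have : (1 - t) * L.2 + t * R.2 = L.2 + (a'.1 - L.1) * ((R.2 - L.2) / (R.1 - L.1)) := by
        rw [ht]; ring
      rw [this]; exact hu6.le
    -- comparison on the exit set
    have key : ∀ w : ℤ × ℤ,
        exitK μ quadrant z w * ENNReal.ofReal (Real.exp (dot a' (toR w)))
          ≤ exitK μ quadrant z w *
            (ENNReal.ofReal (Real.exp (dot b (toR w)))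
              + ENNReal.ofReal (Real.exp (dot c (toR w)))) := by
      intro w
      by_cases hw : w ∈ quadrant
      · have h0 : exitK μ quadrant z w = 0 := by
          rw [exitK]
          exact Set.indicator_of_notMem (by simpa using hw) _
        simp [h0]
      · refine mul_le_mul_right ?_ _
        have hw' : w.1 ≤ 0 ∨ w.2 ≤ 0 := by
          by_contra hcon
          push_neg at hcon
          exact hw ⟨hcon.1, hcon.2⟩
        rcases hw' with h | h
        · refine le_trans (ENNReal.ofReal_le_ofReal (Real.exp_le_exp.2 ?_)) le_self_add
          have hw1 : (w.1 : ℝ) ≤ 0 := by exact_mod_cast h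
          have hb1' : ((1 - s) * B.1 + s * T.1) ≤ a'.1 := hb1
          have hb2' : ((1 - s) * B.2 + s * T.2) = a'.2 := hb2
          have hp : 0 ≤ (a'.1 - ((1 - s) * B.1 + s * T.1)) * (-(w.1 : ℝ)) :=
            mul_nonneg (sub_nonneg.2 hb1') (neg_nonneg.2 hw1)
          simp only [dot, toR]
          simp only [hbdef, hb2']
          linarith [hp]
        · refine le_trans (ENNReal.ofReal_le_ofReal (Real.exp_le_exp.2 ?_)) le_add_self
          have hw2 : (w.2 : ℝ) ≤ 0 := by exact_mod_cast h
          have hc1' : ((1 - t) * L.1 + t * R.1) = a'.1 := hc1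
          have hc2' : ((1 - t) * L.2 + t * R.2) ≤ a'.2 := hc2
          have hp : 0 ≤ (a'.2 - ((1 - t) * L.2 + t * R.2)) * (-(w.2 : ℝ)) :=
            mul_nonneg (sub_nonneg.2 hc2') (neg_nonneg.2 hw2)
          simp only [dot, toR]
          simp only [hcdef, hc1']
          linarith [hp]
    calc Eexit μ quadrant z (fun w => ENNReal.ofReal (Real.exp (dot a' (toR w))))
        ≤ ∑' w : ℤ × ℤ, exitK μ quadrant z w *
            (ENNReal.ofReal (Real.exp (dot b (toR w)))
              + ENNReal.ofReal (Real.exp (dot c (toR w)))) := ENNReal.tsum_le_tsum key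
      _ = Eexit μ quadrant z (fun w => ENNReal.ofReal (Real.exp (dot b (toR w))))
          + Eexit μ quadrant z (fun w => ENNReal.ofReal (Real.exp (dot c (toR w)))) := by
          simp only [mul_add]
          rw [ENNReal.tsum_add]; rfl
      _ ≤ ENNReal.ofReal (Real.exp (dot b (toR z))) + ENNReal.ofReal (Real.exp (dot c (toR z))) :=
          add_le_add (eexit_exp_le μ quadrant b hφb z) (eexit_exp_le μ quadrant c hφc z)
      _ < ⊤ := by
          exact ENNReal.add_lt_top.2 ⟨ENNReal.ofReal_lt_top, ENNReal.ofReal_lt_top⟩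

end KRWQ
end

section
/- Under hypotheses (H1) and (H3), the critical point a(1,0) has an open neighborhood U ⊂ ℝ² such that for every a ∈ U and every z ∈ ℕ*×ℕ*, the quantity E_z(exp(a·S(τ)); τ = τ₁ < τ₂) is finite. Moreover, for every δ > 0 small enough there is a point â = (â₁, â₂) ∈ ∂D with â₁ < a(1,0)₁ and â₂ = a(1,0)₂ + δ such that E_z(exp(a(1,0)·S(τ) + δ S₂(τ)); τ = τ₁ < τ₂) ≤ exp(â·z) for all z ∈ ℕ*×ℕ*. -/
open scoped ENNReal Classical
open Filter

namespace KRWQ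

open scoped Topology

lemma Eexit_le {G : Type*} [AddCommGroup G] (μ : G → ℝ≥0∞) (A : Set G) (e : G → ℝ≥0∞)
    (hmul : ∀ v d : G, e (v + d) = e v * e d)
    (hφ : ∑' d : G, μ d * e d ≤ 1) (z : G) :
    Eexit μ A z e ≤ e z := by
  set B : ℕ → G → ℝ≥0∞ := fun n u => ∑' v : G, nstepK μ A n z v * μ (u - v) with hB
  set T : ℕ → ℝ≥0∞ := fun n => ∑' w : G, nstepK μ A n z w * e w with hT
  set X : ℕ → ℝ≥0∞ := fun n => ∑' w : G, Aᶜ.indicator (B n) w * e w with hX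
  have hT0 : T 0 = e z := by
    simp only [hT]
    rw [tsum_eq_single z]
    · simp [nstepK]
    · intro w hw
      simp [nstepK, hw]
  have hstep : ∀ n, T (n + 1) + X n ≤ T n := by
    intro n
    have h1 : T (n + 1) + X n = ∑' w : G, B n w * e w := by
      rw [hT, hX, ← ENNReal.tsum_add]
      refine tsum_congr fun w => ?_
      have : nstepK μ A (n+1) z w = A.indicator (B n) w := rfl
      rw [this, ← add_mul]
      congr 1
      by_cases hw : w ∈ A
      · simp [Set.indicator_of_mem hw, Set.indicator_of_notMem (by simpa using hw : w ∉ Aᶜ)]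
      · simp [Set.indicator_of_notMem hw, Set.indicator_of_mem (by simpa using hw : w ∈ Aᶜ)]
    rw [h1]
    have h2 : ∑' w : G, B n w * e w
        = ∑' v : G, nstepK μ A n z v * ∑' w : G, μ (w - v) * e w := by
      calc ∑' w : G, B n w * e w
          = ∑' (w : G) (v : G), nstepK μ A n z v * μ (w - v) * e w := by
            refine tsum_congr fun w => ?_
            rw [hB, ENNReal.tsum_mul_right]
        _ = ∑' (v : G) (w : G), nstepK μ A n z v * (μ (w - v) * e w) := by
            rw [ENNReal.tsum_comm]
            exact tsum_congr fun v => tsum_congr fun w => by ring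
        _ = ∑' v : G, nstepK μ A n z v * ∑' w : G, μ (w - v) * e w := by
            exact tsum_congr fun v => ENNReal.tsum_mul_left
    rw [h2]
    refine ENNReal.tsum_le_tsum fun v => ?_
    have h3 : ∑' w : G, μ (w - v) * e w = e v * ∑' d : G, μ d * e d := by
      rw [← Equiv.tsum_eq (Equiv.addLeft v) (fun w => μ (w - v) * e w)]
      rw [← ENNReal.tsum_mul_left]
      refine tsum_congr fun d => ?_
      simp [hmul, Equiv.addLeft]
      ring
    rw [h3]
    calc nstepK μ A n z v * (e v * ∑' d : G, μ d * e d)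
        ≤ nstepK μ A n z v * (e v * 1) := by gcongr
      _ = nstepK μ A n z v * e v := by rw [mul_one]
  have hind : ∀ n, T n + ∑ k ∈ Finset.range n, X k ≤ e z := by
    intro n
    induction n with
    | zero => simp [hT0]
    | succ n ih =>
        calc T (n+1) + ∑ k ∈ Finset.range (n+1), X k
            = (T (n+1) + X n) + ∑ k ∈ Finset.range n, X k := by
              rw [Finset.sum_range_succ]; ring
          _ ≤ T n + ∑ k ∈ Finset.range n, X k := by gcongr; exact hstep n
          _ ≤ e z := ih
  have hXsum : ∑' n : ℕ, X n ≤ e z := by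
    rw [ENNReal.tsum_eq_iSup_sum]
    refine iSup_le fun s => ?_
    obtain ⟨n, hn⟩ := s.exists_nat_subset_range
    calc ∑ k ∈ s, X k ≤ ∑ k ∈ Finset.range n, X k :=
          Finset.sum_le_sum_of_subset hn
      _ ≤ T n + ∑ k ∈ Finset.range n, X k := le_add_self
      _ ≤ e z := hind n
  have hE : Eexit μ A z e = ∑' n : ℕ, X n := by
    rw [Eexit, ENNReal.tsum_comm]
    refine (tsum_congr fun w => ?_)
    by_cases hw : w ∈ Aᶜ
    · rw [exitK, Set.indicator_of_mem hw, ← ENNReal.tsum_mul_right]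
      exact tsum_congr fun n => by rw [Set.indicator_of_mem hw, hB]
    · rw [exitK, Set.indicator_of_notMem hw]
      simp [Set.indicator_of_notMem hw]
  rw [hE]; exact hXsum

noncomputable def Freal (μ : ℤ × ℤ → ℝ≥0∞) (a : ℝ × ℝ) : ℝ :=
  ∑' z : ℤ × ℤ, (μ z).toReal * Real.exp (dot a (toR z))

variable {μ : ℤ × ℤ → ℝ≥0∞}

lemma dot_add_smul (x d : ℝ × ℝ) (s : ℝ) (w : ℝ × ℝ) :
    dot (x + s • d) w = dot x w + s * dot d w := by
  simp only [dot, Prod.fst_add, Prod.snd_add, Prod.smul_fst, Prod.smul_snd, smul_eq_mul]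
  ring

lemma summable_term (h3 : H3 μ) (a : ℝ × ℝ) :
    Summable (fun z : ℤ × ℤ => (μ z).toReal * Real.exp (dot a (toR z))) := by
  have := ENNReal.summable_toReal
    (f := fun z : ℤ × ℤ => μ z * ENNReal.ofReal (Real.exp (dot a (toR z)))) (h3 a).ne
  simpa [ENNReal.toReal_mul, ENNReal.toReal_ofReal (Real.exp_nonneg _)] using this

lemma jumpGF_toReal (htop : ∀ z, μ z ≠ ⊤) (a : ℝ × ℝ) :
    (jumpGF μ a).toReal = Freal μ a := by
  rw [jumpGF, ENNReal.tsum_toReal_eq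
    (fun z => ENNReal.mul_ne_top (htop z) ENNReal.ofReal_ne_top)]
  exact tsum_congr fun z => by
    rw [ENNReal.toReal_mul, ENNReal.toReal_ofReal (Real.exp_nonneg _)]

lemma jumpGF_eq_ofReal (h3 : H3 μ) (htop : ∀ z, μ z ≠ ⊤) (a : ℝ × ℝ) :
    jumpGF μ a = ENNReal.ofReal (Freal μ a) := by
  rw [← jumpGF_toReal htop, ENNReal.ofReal_toReal (h3 a).ne]

lemma jumpGF_le_one_iff (h3 : H3 μ) (htop : ∀ z, μ z ≠ ⊤) (a : ℝ × ℝ) :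
    jumpGF μ a ≤ 1 ↔ Freal μ a ≤ 1 := by
  rw [jumpGF_eq_ofReal h3 htop, ← ENNReal.ofReal_one,
    ENNReal.ofReal_le_ofReal_iff zero_le_one]

lemma jumpGF_eq_one_iff (h3 : H3 μ) (htop : ∀ z, μ z ≠ ⊤) (a : ℝ × ℝ) :
    jumpGF μ a = 1 ↔ Freal μ a = 1 := by
  rw [jumpGF_eq_ofReal h3 htop, ENNReal.ofReal_eq_one]

lemma Freal_convexOn (h3 : H3 μ) : ConvexOn ℝ Set.univ (Freal μ) := by
  refine ⟨convex_univ, fun x _ y _ p q hp hq hpq => ?_⟩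
  have hsx := (summable_term h3 x).mul_left p
  have hsy := (summable_term h3 y).mul_left q
  calc Freal μ (p • x + q • y)
      ≤ ∑' z : ℤ × ℤ, (p * ((μ z).toReal * Real.exp (dot x (toR z)))
          + q * ((μ z).toReal * Real.exp (dot y (toR z)))) := by
        refine Summable.tsum_le_tsum (fun z => ?_) (summable_term h3 _) (hsx.add hsy)
        have h := convexOn_exp.2 (Set.mem_univ (dot x (toR z)))
          (Set.mem_univ (dot y (toR z))) hp hq hpq
        simp only [smul_eq_mul] at h
        have hd : dot (p • x + q • y) (toR z)
            = p * dot x (toR z) + q * dot y (toR z) := by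
          simp only [dot, Prod.fst_add, Prod.snd_add, Prod.smul_fst, Prod.smul_snd,
            smul_eq_mul]
          ring
        rw [hd]
        have hm : (μ z).toReal * Real.exp (p * dot x (toR z) + q * dot y (toR z))
            ≤ (μ z).toReal * (p * Real.exp (dot x (toR z)) + q * Real.exp (dot y (toR z))) :=
          mul_le_mul_of_nonneg_left h ENNReal.toReal_nonneg
        nlinarith [hm]
    _ = p • Freal μ x + q • Freal μ y := by
        rw [Summable.tsum_add hsx hsy, tsum_mul_left, tsum_mul_left]
        simp [smul_eq_mul, Freal]

lemma Freal_continuous (h3 : H3 μ) : Continuous (Freal μ) :=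
  continuousOn_univ.mp
    (ConvexOn.continuousOn isOpen_univ (Freal_convexOn h3))

lemma abs_exp_sub_one_le (v : ℝ) : |Real.exp v - 1| ≤ |v| * Real.exp |v| := by
  rcases le_or_gt 0 v with h | h
  · rw [abs_of_nonneg h, abs_of_nonneg (sub_nonneg.mpr (Real.one_le_exp h))]
    have h1 := Real.add_one_le_exp (-v)
    have h2 := Real.exp_pos v
    have h3 : Real.exp (-v) * Real.exp v = 1 := by rw [← Real.exp_add]; simp
    nlinarith
  · rw [abs_of_neg h, abs_of_nonpos (sub_nonpos.mpr (Real.exp_le_one_iff.mpr h.le))]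
    have h1 := Real.add_one_le_exp v
    have h3 : (1:ℝ) ≤ Real.exp (-v) := Real.one_le_exp (by linarith)
    nlinarith [abs_nonneg v, Real.exp_pos v]

lemma abs_mul_exp_abs_le (u : ℝ) :
    |u| * Real.exp |u| ≤ Real.exp (2 * u) + Real.exp (-(2 * u)) := by
  have h1 : |u| ≤ Real.exp |u| := by
    have := Real.add_one_le_exp |u|; linarith
  have h4 : |u| * Real.exp |u| ≤ Real.exp (2 * |u|) := by
    have h3 : Real.exp |u| * Real.exp |u| = Real.exp (2 * |u|) := by
      rw [← Real.exp_add]; ring_nf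
    nlinarith [Real.exp_nonneg |u|]
  rcases abs_cases u with ⟨he, _⟩ | ⟨he, _⟩
  · rw [he] at h4 ⊢; linarith [(Real.exp_pos (-(2*u))).le]
  · rw [he] at h4 ⊢
    have h5 : 2 * -u = -(2*u) := by ring
    rw [h5] at h4; linarith [(Real.exp_pos (2*u)).le]

lemma summable_bound (h3 : H3 μ) (x d : ℝ × ℝ) :
    Summable (fun z : ℤ × ℤ => (μ z).toReal * Real.exp (dot x (toR z)) *
      (|dot d (toR z)| * Real.exp |dot d (toR z)|)) := by
  refine Summable.of_nonneg_of_le (fun z => by positivity) (fun z => ?_)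
    ((summable_term h3 (x + (2:ℝ) • d)).add (summable_term h3 (x + (-2:ℝ) • d)))
  set u := dot d (toR z)
  have hν : (0:ℝ) ≤ (μ z).toReal * Real.exp (dot x (toR z)) := by positivity
  have key := mul_le_mul_of_nonneg_left (abs_mul_exp_abs_le u) hν
  have e1 : dot (x + (2:ℝ) • d) (toR z) = dot x (toR z) + 2 * u := dot_add_smul x d 2 _
  have e2 : dot (x + (-2:ℝ) • d) (toR z) = dot x (toR z) + (-2) * u := dot_add_smul x d (-2) _
  rw [e1, e2, Real.exp_add, Real.exp_add]
  have : Real.exp ((-2) * u) = Real.exp (-(2*u)) := by ring_nf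
  rw [this]
  nlinarith [key]

lemma summable_nu_dot (h3 : H3 μ) (x d : ℝ × ℝ) :
    Summable (fun z : ℤ × ℤ => (μ z).toReal * Real.exp (dot x (toR z)) * dot d (toR z)) := by
  refine Summable.of_abs ?_
  refine Summable.of_nonneg_of_le (fun z => abs_nonneg _) (fun z => ?_) (summable_bound h3 x d)
  set u := dot d (toR z)
  have hν : (0:ℝ) ≤ (μ z).toReal * Real.exp (dot x (toR z)) := by positivity
  rw [abs_mul, abs_of_nonneg hν]
  have h1 : |u| ≤ |u| * Real.exp |u| := by
    nlinarith [Real.one_le_exp (abs_nonneg u), abs_nonneg u]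
  exact mul_le_mul_of_nonneg_left h1 hν


lemma exp_slope_tendsto (u : ℝ) :
    Tendsto (fun s : ℝ => (Real.exp (s * u) - 1) / s) (𝓝[>] (0:ℝ)) (𝓝 u) := by
  have hd : HasDerivAt (fun s : ℝ => Real.exp (s * u)) u 0 := by
    have := ((hasDerivAt_mul_const (x := (0:ℝ)) u)).exp
    simpa using this
  rw [hasDerivAt_iff_tendsto_slope] at hd
  have h2 : Tendsto (fun s : ℝ => (Real.exp (s * u) - 1) / s) (𝓝[≠] (0:ℝ)) (𝓝 u) := by
    refine hd.congr fun s => ?_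
    rw [slope_def_field]
    simp
  exact h2.mono_left (nhdsWithin_mono 0 fun s hs => ne_of_gt hs)

lemma tendsto_slope_Freal (h3 : H3 μ) (x d : ℝ × ℝ) :
    Tendsto (fun s : ℝ => (Freal μ (x + s • d) - Freal μ x) / s) (𝓝[>] (0:ℝ))
      (𝓝 (∑' z : ℤ × ℤ, (μ z).toReal * Real.exp (dot x (toR z)) * dot d (toR z))) := by
  set ν : ℤ × ℤ → ℝ := fun z => (μ z).toReal * Real.exp (dot x (toR z)) with hν
  have hν0 : ∀ z, 0 ≤ ν z := fun z => by rw [hν]; positivity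
  have hrepr : ∀ s : ℝ, (Freal μ (x + s • d) - Freal μ x) / s
      = ∑' z : ℤ × ℤ, ν z * (Real.exp (s * dot d (toR z)) - 1) / s := by
    intro s
    have h1 : Freal μ (x + s • d) - Freal μ x
        = ∑' z : ℤ × ℤ, ν z * (Real.exp (s * dot d (toR z)) - 1) := by
      rw [Freal, Freal, ← Summable.tsum_sub (summable_term h3 _) (summable_term h3 x)]
      refine tsum_congr fun z => ?_
      rw [dot_add_smul, Real.exp_add, hν]
      ring
    rw [h1, tsum_div_const]
  have hDCT : Tendsto (fun s : ℝ => ∑' z : ℤ × ℤ, ν z * (Real.exp (s * dot d (toR z)) - 1) / s)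
      (𝓝[>] (0:ℝ)) (𝓝 (∑' z : ℤ × ℤ, ν z * dot d (toR z))) := by
    refine tendsto_tsum_of_dominated_convergence
      (bound := fun z : ℤ × ℤ => ν z * (|dot d (toR z)| * Real.exp |dot d (toR z)|))
      (summable_bound h3 x d) (fun z => ?_) ?_
    · have := (exp_slope_tendsto (dot d (toR z))).const_mul (ν z)
      simpa [mul_div_assoc] using this
    · filter_upwards [Ioc_mem_nhdsGT_of_mem (Set.left_mem_Ico.mpr zero_lt_one)] with s hs z
      set u := dot d (toR z)
      have hs0 : 0 < s := hs.1
      have h1 : |Real.exp (s * u) - 1| ≤ s * (|u| * Real.exp |u|) := by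
        calc |Real.exp (s * u) - 1| ≤ |s * u| * Real.exp |s * u| := abs_exp_sub_one_le _
          _ = s * (|u| * Real.exp (s * |u|)) := by
              rw [abs_mul, abs_of_pos hs0]; ring
          _ ≤ s * (|u| * Real.exp |u|) := by
              have : s * |u| ≤ |u| := by nlinarith [abs_nonneg u, hs.2]
              have := Real.exp_le_exp.mpr this
              gcongr
      rw [Real.norm_eq_abs, abs_div, abs_of_pos hs0, abs_mul, abs_of_nonneg (hν0 z),
        div_le_iff₀ hs0]
      calc ν z * |Real.exp (s * u) - 1| ≤ ν z * (s * (|u| * Real.exp |u|)) :=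
            mul_le_mul_of_nonneg_left h1 (hν0 z)
        _ = ν z * (|u| * Real.exp |u|) * s := by ring
  exact (tendsto_congr fun s => (hrepr s).symm).mp hDCT


lemma slope_le_Freal (h3 : H3 μ) (x d : ℝ × ℝ) :
    (∑' z : ℤ × ℤ, (μ z).toReal * Real.exp (dot x (toR z)) * dot d (toR z))
      ≤ Freal μ (x + d) - Freal μ x := by
  refine le_of_tendsto (tendsto_slope_Freal h3 x d) ?_
  filter_upwards [Ioc_mem_nhdsGT_of_mem (Set.left_mem_Ico.mpr zero_lt_one)] with s hs
  have hconv := (Freal_convexOn h3).2 (Set.mem_univ (x + d)) (Set.mem_univ x)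
    hs.1.le (by linarith [hs.2] : (0:ℝ) ≤ 1 - s) (by ring)
  have hpt : s • (x + d) + (1 - s) • x = x + s • d := by module
  rw [hpt, smul_eq_mul, smul_eq_mul] at hconv
  rw [div_le_iff₀ hs.1]
  nlinarith [hconv]

lemma lim_nonneg_Freal (h3 : H3 μ) (x d : ℝ × ℝ)
    (h : ∀ s ∈ Set.Ioc (0:ℝ) 1, Freal μ x ≤ Freal μ (x + s • d)) :
    0 ≤ ∑' z : ℤ × ℤ, (μ z).toReal * Real.exp (dot x (toR z)) * dot d (toR z) := by
  refine ge_of_tendsto (tendsto_slope_Freal h3 x d) ?_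
  filter_upwards [Ioc_mem_nhdsGT_of_mem (Set.left_mem_Ico.mpr zero_lt_one)] with s hs
  exact div_nonneg (sub_nonneg.mpr (h s hs)) hs.1.le

lemma L_decomp (h3 : H3 μ) (x d : ℝ × ℝ) :
    (∑' z : ℤ × ℤ, (μ z).toReal * Real.exp (dot x (toR z)) * dot d (toR z))
      = d.1 * (∑' z : ℤ × ℤ, (μ z).toReal * Real.exp (dot x (toR z)) * ((z.1 : ℝ)))
        + d.2 * (∑' z : ℤ × ℤ, (μ z).toReal * Real.exp (dot x (toR z)) * ((z.2 : ℝ))) := by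
  have s1 : Summable (fun z : ℤ × ℤ =>
      (μ z).toReal * Real.exp (dot x (toR z)) * ((z.1 : ℝ))) := by
    have := summable_nu_dot h3 x (1, 0)
    simpa [dot, toR] using this
  have s2 : Summable (fun z : ℤ × ℤ =>
      (μ z).toReal * Real.exp (dot x (toR z)) * ((z.2 : ℝ))) := by
    have := summable_nu_dot h3 x (0, 1)
    simpa [dot, toR] using this
  calc (∑' z : ℤ × ℤ, (μ z).toReal * Real.exp (dot x (toR z)) * dot d (toR z))
      = ∑' z : ℤ × ℤ, (d.1 * ((μ z).toReal * Real.exp (dot x (toR z)) * ((z.1 : ℝ)))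
          + d.2 * ((μ z).toReal * Real.exp (dot x (toR z)) * ((z.2 : ℝ)))) := by
        refine tsum_congr fun z => ?_
        simp only [dot, toR]
        ring
    _ = _ := by
        rw [Summable.tsum_add (s1.mul_left d.1) (s2.mul_left d.2), tsum_mul_left, tsum_mul_left]

lemma exists_above (hprob : ∑' z : ℤ × ℤ, μ z = 1) (h1 : H1 μ) (h3 : H3 μ)
    (astar : ℝ × ℝ) (hstar1 : Freal μ astar = 1)
    (hmax : ∀ c : ℝ × ℝ, Freal μ c ≤ 1 → c ≠ astar → c.1 < astar.1) :
    ∃ c : ℝ × ℝ, Freal μ c ≤ 1 ∧ astar.2 < c.2 := by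
  by_contra hcon
  push_neg at hcon
  have htop : ∀ z, μ z ≠ ⊤ := fun z =>
    ne_top_of_le_ne_top ENNReal.one_ne_top (hprob ▸ ENNReal.le_tsum z)
  have hgrow : ∀ d : ℝ × ℝ, (0 < d.1 ∨ 0 < d.2) →
      ∀ s ∈ Set.Ioc (0:ℝ) 1, Freal μ astar ≤ Freal μ (astar + s • d) := by
    intro d hd s hs
    by_contra hlt
    push_neg at hlt
    have hle : Freal μ (astar + s • d) ≤ 1 := by rw [hstar1] at hlt; linarith
    have hne : astar + s • d ≠ astar := by
      intro h
      have h0 : s • d = 0 := by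
        have := congrArg (fun p => p - astar) h
        simpa using this
      rcases smul_eq_zero.mp h0 with h' | h'
      · exact absurd h' (ne_of_gt hs.1)
      · rw [h'] at hd; simp at hd
    have h1' := hmax _ hle hne
    have h2' := hcon _ hle
    simp only [Prod.fst_add, Prod.snd_add, Prod.smul_fst, Prod.smul_snd, smul_eq_mul] at h1' h2'
    rcases hd with h | h
    · nlinarith [hs.1]
    · nlinarith [hs.1]
  set g1 := ∑' z : ℤ × ℤ, (μ z).toReal * Real.exp (dot astar (toR z)) * ((z.1 : ℝ)) with hg1def
  set g2 := ∑' z : ℤ × ℤ, (μ z).toReal * Real.exp (dot astar (toR z)) * ((z.2 : ℝ)) with hg2def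
  have hL : ∀ d : ℝ × ℝ, (0 < d.1 ∨ 0 < d.2) → 0 ≤ d.1 * g1 + d.2 * g2 := by
    intro d hd
    have := lim_nonneg_Freal h3 astar d (hgrow d hd)
    rwa [L_decomp h3 astar d] at this
  have hg1a : 0 ≤ g1 := by have := hL (1, 0) (Or.inl one_pos); simpa using this
  have hg2a : 0 ≤ g2 := by have := hL (0, 1) (Or.inr one_pos); simpa using this
  have hg2 : g2 = 0 := by
    refine le_antisymm ?_ hg2a
    by_contra h
    push_neg at h
    have hd1 : (0:ℝ) < (1, -((g1 + 1) / g2)).1 := one_pos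
    have := hL (1, -((g1 + 1) / g2)) (Or.inl hd1)
    simp only at this
    have hne : g2 ≠ 0 := ne_of_gt h
    have hc : (g1 + 1) / g2 * g2 = g1 + 1 := div_mul_cancel₀ _ hne
    rw [neg_mul, hc] at this
    linarith
  have hg1 : g1 = 0 := by
    refine le_antisymm ?_ hg1a
    by_contra h
    push_neg at h
    have := hL (-(1 / g1), 1) (Or.inr one_pos)
    simp only [hg2, mul_zero, add_zero] at this
    have hne : g1 ≠ 0 := ne_of_gt h
    have hc : 1 / g1 * g1 = 1 := one_div_mul_cancel hne
    rw [neg_mul, hc] at this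
    linarith
  have hge : ∀ y : ℝ × ℝ, 1 ≤ Freal μ y := by
    intro y
    have hsl := slope_le_Freal h3 astar (y - astar)
    rw [L_decomp h3 astar (y - astar), ← hg1def, ← hg2def, hg1, hg2] at hsl
    simp only [mul_zero, add_zero, zero_add] at hsl
    have hyy : astar + (y - astar) = y := by abel
    rw [hyy, hstar1] at hsl
    linarith
  have hF0 : Freal μ 0 = 1 := by
    have hd0 : ∀ z : ℤ × ℤ, dot 0 (toR z) = 0 := fun z => by simp [dot]
    rw [Freal]
    simp only [hd0, Real.exp_zero, mul_one]
    rw [← ENNReal.tsum_toReal_eq htop, hprob]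
    simp
  have hm : ∀ d : ℝ × ℝ, 0 ≤ d.1 * (∑' z : ℤ × ℤ, (μ z).toReal * Real.exp (dot 0 (toR z)) * ((z.1 : ℝ)))
      + d.2 * (∑' z : ℤ × ℤ, (μ z).toReal * Real.exp (dot 0 (toR z)) * ((z.2 : ℝ))) := by
    intro d
    have := lim_nonneg_Freal h3 0 d (fun s _ => by rw [hF0, zero_add]; exact hge _)
    rwa [L_decomp h3 0 d] at this
  set m1 := ∑' z : ℤ × ℤ, (μ z).toReal * Real.exp (dot 0 (toR z)) * ((z.1 : ℝ)) with hm1def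
  set m2 := ∑' z : ℤ × ℤ, (μ z).toReal * Real.exp (dot 0 (toR z)) * ((z.2 : ℝ)) with hm2def
  have e1 := hm (1, 0)
  have e2 := hm (-1, 0)
  have e3 := hm (0, 1)
  have e4 := hm (0, -1)
  simp only at e1 e2 e3 e4
  have hm1 : m1 = 0 := by linarith
  have hm2 : m2 = 0 := by linarith
  have hid1 : (∑' z : ℤ × ℤ, ((z.1 : ℝ)) * (μ z).toReal) = m1 := by
    rw [hm1def]
    refine tsum_congr fun z => ?_
    simp [dot, mul_comm]
  have hid2 : (∑' z : ℤ × ℤ, ((z.2 : ℝ)) * (μ z).toReal) = m2 := by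
    rw [hm2def]
    refine tsum_congr fun z => ?_
    simp [dot, mul_comm]
  exact h1.2.2.2 (by rw [hid1, hid2, hm1, hm2])


lemma dot_toR_add (a : ℝ × ℝ) (v d : ℤ × ℤ) :
    dot a (toR (v + d)) = dot a (toR v) + dot a (toR d) := by
  simp only [dot, toR, Prod.fst_add, Prod.snd_add]
  push_cast
  ring

lemma exists_ahat {μ : ℤ × ℤ → ℝ≥0∞} (h3 : H3 μ) (astar b : ℝ × ℝ)
    (hstar1 : Freal μ astar = 1)
    (hmax : ∀ c : ℝ × ℝ, Freal μ c ≤ 1 → c ≠ astar → c.1 < astar.1)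
    (hbF : Freal μ b = 1) (hb1 : b.1 < astar.1) (hb2 : astar.2 < b.2)
    (δ : ℝ) (hδ : 0 < δ) (hδ0 : δ ≤ b.2 - astar.2) :
    ∃ ahat : ℝ × ℝ, Freal μ ahat = 1 ∧ ahat.1 < astar.1 ∧ ahat.2 = astar.2 + δ := by
  have hden : 0 < b.2 - astar.2 := by linarith
  set t : ℝ := δ / (b.2 - astar.2) with htdef
  have ht0 : 0 < t := div_pos hδ hden
  have ht1 : t ≤ 1 := (div_le_one hden).mpr hδ0
  set c : ℝ × ℝ := astar + t • (b - astar) with hcdef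
  have hc2 : c.2 = astar.2 + δ := by
    simp only [hcdef, Prod.snd_add, Prod.smul_snd, Prod.snd_sub, smul_eq_mul, htdef]
    field_simp
  have hc1 : c.1 < astar.1 := by
    simp only [hcdef, Prod.fst_add, Prod.smul_fst, Prod.fst_sub, smul_eq_mul]
    nlinarith
  have hcle : Freal μ c ≤ 1 := by
    have hconv := (Freal_convexOn h3).2 (Set.mem_univ astar) (Set.mem_univ b)
      (by linarith : (0:ℝ) ≤ 1 - t) ht0.le (by ring)
    have hpt : (1 - t) • astar + t • b = c := by rw [hcdef]; module
    rw [hpt, hstar1, hbF, smul_eq_mul, smul_eq_mul] at hconv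
    linarith
  rcases eq_or_lt_of_le hcle with heq | hlt
  · exact ⟨c, heq, hc1, hc2⟩
  · set sbar : ℝ := astar.1 - c.1 with hsbardef
    have hsbar0 : 0 < sbar := by simp only [hsbardef]; linarith
    set g : ℝ → ℝ := fun s => Freal μ (c + s • ((1:ℝ), (0:ℝ))) with hgdef
    have hgc : Continuous g := by
      apply (Freal_continuous h3).comp
      exact continuous_const.add (continuous_id.smul continuous_const)
    have hpt : c + sbar • ((1:ℝ), (0:ℝ)) = (astar.1, astar.2 + δ) := by
      apply Prod.ext
      · simp [hsbardef]
      · simp [hc2]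
    have hg0 : g 0 < 1 := by
      have : c + (0:ℝ) • ((1:ℝ), (0:ℝ)) = c := by simp
      simp only [hgdef, this]
      exact hlt
    have hgs : 1 < g sbar := by
      by_contra hle
      push_neg at hle
      have hne : ((astar.1, astar.2 + δ) : ℝ × ℝ) ≠ astar := by
        intro h
        have := congrArg Prod.snd h
        simp at this
        linarith
      have := hmax _ (by rw [← hpt]; exact hle) hne
      simp at this
    have h1mem : (1:ℝ) ∈ Set.Icc (g 0) (g sbar) := ⟨hg0.le, hgs.le⟩
    obtain ⟨s, hsmem, hgs1⟩ := intermediate_value_Icc hsbar0.le hgc.continuousOn h1mem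
    refine ⟨c + s • ((1:ℝ), (0:ℝ)), hgs1, ?_, ?_⟩
    · have hne : c + s • ((1:ℝ), (0:ℝ)) ≠ astar := by
        intro h
        have := congrArg Prod.snd h
        simp [hc2] at this
        linarith
      exact hmax _ (le_of_eq hgs1) hne
    · simp [hc2]


lemma cmp_Eexit1 {μ : ℤ × ℤ → ℝ≥0∞} (f g : ℤ × ℤ → ℝ≥0∞)
    (hfg : ∀ w : ℤ × ℤ, w.1 ≤ 0 → 0 < w.2 → f w ≤ g w) (z : ℤ × ℤ) :
    Eexit1 μ z f ≤ Eexit μ quadrant z g := by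
  rw [Eexit1, Eexit]
  refine ENNReal.tsum_le_tsum fun w => ?_
  by_cases hw : w.1 ≤ 0 ∧ 0 < w.2
  · rw [if_pos hw]
    exact mul_le_mul_right (hfg w hw.1 hw.2) _
  · rw [if_neg hw]
    exact zero_le

lemma key_bound {μ : ℤ × ℤ → ℝ≥0∞} (ahat : ℝ × ℝ) (hgf : jumpGF μ ahat = 1) (z : ℤ × ℤ) :
    Eexit μ quadrant z (fun w => ENNReal.ofReal (Real.exp (dot ahat (toR w))))
      ≤ ENNReal.ofReal (Real.exp (dot ahat (toR z))) := by
  refine Eexit_le μ quadrant _ ?_ ?_ z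
  · intro v d
    rw [← ENNReal.ofReal_mul (Real.exp_nonneg _), ← Real.exp_add, dot_toR_add]
  · exact le_of_eq hgf

/-- **Proposition 3.3.**  Under (H1) and (H3), the critical point `a(1,0)` has an open
neighborhood where the functions `a ↦ E_z(exp(a·S(τ)); τ = τ₁ < τ₂)` are finite for all
`z ∈ ℕ*×ℕ*`.  Moreover, for any `δ > 0` small enough there is a point
`â = (â₁,â₂) ∈ ∂D` with `â₁ < a(1,0)₁` and `â₂ = a(1,0)₂ + δ` such that
`E_z(exp(a(1,0)·S(τ) + δ S₂(τ)); τ = τ₁ < τ₂) ≤ exp(â·z)` for all `z ∈ ℕ*×ℕ*`. -/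
theorem finiteness_near_critical_point
    (μ : ℤ × ℤ → ℝ≥0∞) (hprob : ∑' z : ℤ × ℤ, μ z = 1)
    (h1 : H1 μ) (h3 : H3 μ)
    (aOf : ℝ × ℝ → ℝ × ℝ) (haOf : IsDirMap μ aOf) :
    (∃ U : Set (ℝ × ℝ), IsOpen U ∧ aOf ((1 : ℝ), (0 : ℝ)) ∈ U ∧
      ∀ a ∈ U, ∀ z ∈ quadrant,
        Eexit1 μ z (fun w => ENNReal.ofReal (Real.exp (dot a (toR w)))) < ⊤) ∧
    (∃ δ₀ : ℝ, 0 < δ₀ ∧ ∀ δ : ℝ, 0 < δ → δ ≤ δ₀ →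
      ∃ ahat : ℝ × ℝ, jumpGF μ ahat = 1 ∧
        ahat.1 < (aOf ((1 : ℝ), (0 : ℝ))).1 ∧
        ahat.2 = (aOf ((1 : ℝ), (0 : ℝ))).2 + δ ∧
        ∀ z ∈ quadrant,
          Eexit1 μ z (fun w =>
              ENNReal.ofReal
                (Real.exp (dot (aOf ((1 : ℝ), (0 : ℝ))) (toR w) + δ * (w.2 : ℝ)))) ≤
            ENNReal.ofReal (Real.exp (dot ahat (toR z)))) := by
  have htop : ∀ z, μ z ≠ ⊤ := fun z =>
    ne_top_of_le_ne_top ENNReal.one_ne_top (hprob ▸ ENNReal.le_tsum z)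
  set astar := aOf ((1 : ℝ), (0 : ℝ)) with hastar
  obtain ⟨hstar_gf, hstar_max⟩ := haOf ((1 : ℝ), (0 : ℝ)) (by norm_num [Prod.ext_iff])
  have hstar1 : Freal μ astar = 1 := (jumpGF_eq_one_iff h3 htop _).mp hstar_gf
  have hmax : ∀ c : ℝ × ℝ, Freal μ c ≤ 1 → c ≠ astar → c.1 < astar.1 := by
    intro c hc hne
    have := hstar_max c ((jumpGF_le_one_iff h3 htop c).mpr hc) hne
    simpa [dot] using this
  obtain ⟨c0, hc0le, hc0⟩ := exists_above hprob h1 h3 astar hstar1 hmax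
  obtain ⟨hb_gf, hb_max⟩ := haOf ((0 : ℝ), (1 : ℝ)) (by norm_num [Prod.ext_iff])
  set b := aOf ((0 : ℝ), (1 : ℝ)) with hbdef
  have hbF : Freal μ b = 1 := (jumpGF_eq_one_iff h3 htop _).mp hb_gf
  have hb2 : astar.2 < b.2 := by
    by_cases hcb : c0 = b
    · rw [← hcb]; exact hc0
    · have := hb_max c0 ((jumpGF_le_one_iff h3 htop c0).mpr hc0le) hcb
      simp only [dot] at this
      nlinarith
  have hbne : b ≠ astar := by
    intro h
    rw [h] at hb2
    exact lt_irrefl _ hb2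
  have hb1 : b.1 < astar.1 := hmax b (le_of_eq hbF) hbne
  set δ₀ : ℝ := b.2 - astar.2 with hδ₀def
  have hδ₀pos : 0 < δ₀ := by simp only [hδ₀def]; linarith
  -- the construction, for every 0 < δ ≤ δ₀
  have hconstr : ∀ δ : ℝ, 0 < δ → δ ≤ δ₀ →
      ∃ ahat : ℝ × ℝ, jumpGF μ ahat = 1 ∧ ahat.1 < astar.1 ∧ ahat.2 = astar.2 + δ := by
    intro δ hδ hδle
    obtain ⟨ahat, hF, h1', h2'⟩ := exists_ahat h3 astar b hstar1 hmax hbF hb1 hb2 δ hδ hδle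
    exact ⟨ahat, (jumpGF_eq_one_iff h3 htop _).mpr hF, h1', h2'⟩
  constructor
  · -- Part 1
    obtain ⟨a0, hgf0, h10, h20⟩ := hconstr δ₀ hδ₀pos le_rfl
    refine ⟨{a : ℝ × ℝ | a0.1 < a.1 ∧ a.2 < a0.2}, ?_, ?_, ?_⟩
    · exact (isOpen_lt continuous_const continuous_fst).inter
        (isOpen_lt continuous_snd continuous_const)
    · exact ⟨h10, by rw [h20]; linarith⟩
    · intro a ha z _
      have hle1 : Eexit1 μ z (fun w => ENNReal.ofReal (Real.exp (dot a (toR w))))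
          ≤ Eexit μ quadrant z (fun w => ENNReal.ofReal (Real.exp (dot a0 (toR w)))) := by
        refine cmp_Eexit1 _ _ (fun w hw1 hw2 => ?_) z
        apply ENNReal.ofReal_le_ofReal
        apply Real.exp_le_exp.mpr
        have hw1' : ((w.1 : ℝ)) ≤ 0 := by exact_mod_cast hw1
        have hw2' : (0:ℝ) < ((w.2 : ℝ)) := by exact_mod_cast hw2
        obtain ⟨ha1, ha2⟩ := ha
        simp only [dot, toR]
        nlinarith
      calc Eexit1 μ z (fun w => ENNReal.ofReal (Real.exp (dot a (toR w))))
          ≤ Eexit μ quadrant z (fun w => ENNReal.ofReal (Real.exp (dot a0 (toR w)))) := hle1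
        _ ≤ ENNReal.ofReal (Real.exp (dot a0 (toR z))) := key_bound a0 hgf0 z
        _ < ⊤ := ENNReal.ofReal_lt_top
  · -- Part 2
    refine ⟨δ₀, hδ₀pos, fun δ hδ hδle => ?_⟩
    obtain ⟨ahat, hgf, h1', h2'⟩ := hconstr δ hδ hδle
    refine ⟨ahat, hgf, h1', h2', fun z _ => ?_⟩
    have hle1 : Eexit1 μ z (fun w =>
          ENNReal.ofReal (Real.exp (dot astar (toR w) + δ * ((w.2 : ℝ)))))
        ≤ Eexit μ quadrant z (fun w => ENNReal.ofReal (Real.exp (dot ahat (toR w)))) := by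
      refine cmp_Eexit1 _ _ (fun w hw1 hw2 => ?_) z
      apply ENNReal.ofReal_le_ofReal
      apply Real.exp_le_exp.mpr
      have hw1' : ((w.1 : ℝ)) ≤ 0 := by exact_mod_cast hw1
      have hw2' : (0:ℝ) < ((w.2 : ℝ)) := by exact_mod_cast hw2
      have e1 : ahat.2 = astar.2 + δ := h2'
      simp only [dot, toR]
      nlinarith [h1']
    exact le_trans hle1 (key_bound ahat hgf z)

end KRWQ
end

section
/- Let (ξ(t)) be a random walk on ℤ having zero mean and translation-invariant transition probabilities P(x,x') = P(0,x'−x) such that, for some δ > 0, ∑_x e^{−δx} P(0,x) < ∞ and ∑_x |x| P(0,x) < ∞. Let T₀ = inf{t ≥ 0 : ξ(t) ≤ 0}. Then the function f(x) = E_x(|ξ(T₀)|) is finite for every x ∈ ℕ*. -/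
open scoped ENNReal Classical
open Filter

namespace KRWQ

open Real

lemma nstepK_pos_supp (ν : ℤ → ℝ≥0∞) {x : ℤ} (hx : 0 < x) (n : ℕ) (v : ℤ)
    (h : nstepK ν {y : ℤ | 0 < y} n x v ≠ 0) : 0 < v := by
  cases n with
  | zero =>
    by_cases hv : v = x
    · subst hv; exact hx
    · simp [nstepK, hv] at h
  | succ n =>
    by_cases hv : v ∈ {y : ℤ | 0 < y}
    · exact hv
    · simp only [nstepK] at h
      rw [Set.indicator_of_notMem hv] at h
      exact absurd rfl h

lemma nstepK_deg (ν : ℤ → ℝ≥0∞) (hdeg : ∀ s : ℤ, s ≠ 0 → ν s = 0) {x : ℤ} :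
    ∀ (n : ℕ) (v : ℤ), nstepK ν {y : ℤ | 0 < y} n x v ≠ 0 → v = x := by
  intro n
  induction n with
  | zero =>
    intro v h
    by_contra hv
    simp [nstepK, hv] at h
  | succ n ih =>
    intro v h
    simp only [nstepK] at h
    have h2 : (∑' w : ℤ, nstepK ν {y : ℤ | 0 < y} n x w * ν (v - w)) ≠ 0 := by
      intro h0
      apply h
      by_cases hv : v ∈ {y : ℤ | 0 < y}
      · rw [Set.indicator_of_mem hv]; exact h0
      · exact Set.indicator_of_notMem hv _
    have h3 : ¬ ∀ w : ℤ, nstepK ν {y : ℤ | 0 < y} n x w * ν (v - w) = 0 :=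
      fun hall => h2 (ENNReal.tsum_eq_zero.mpr hall)
    push_neg at h3
    obtain ⟨w, hw⟩ := h3
    have hwx : w = x := ih w (fun h0 => hw (by rw [h0, zero_mul]))
    subst hwx
    have hν : ν (v - w) ≠ 0 := fun h0 => hw (by rw [h0, mul_zero])
    have : v - w = 0 := by
      by_contra hne
      exact hν (hdeg _ hne)
    omega

lemma real_drift (νr : ℤ → ℝ) (hνnn : ∀ s, 0 ≤ νr s) (hνsum : Summable νr)
    (hν1 : ∑' s : ℤ, νr s = 1) (ε : ℝ) (hε : 0 < ε)
    (hMsum : Summable (fun s : ℤ => νr s * Real.exp (-(2*ε) * (s : ℝ))))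
    (hχsum : Summable (fun s : ℤ => νr s * Real.exp (-ε * (s : ℝ))))
    (hχ : 1 < ∑' s : ℤ, νr s * Real.exp (-ε * (s : ℝ)))
    (hχle : (∑' s : ℤ, νr s * Real.exp (-ε * (s : ℝ)))
      ≤ 1 + ∑' s : ℤ, νr s * Real.exp (-(2*ε) * (s : ℝ))) :
    ∀ v : ℤ, 1 ≤ v →
      (∑' s : ℤ, νr s * max ((2 * ((∑' s : ℤ, νr s * Real.exp (-(2*ε) * (s : ℝ))) + 1)
          / ((∑' s : ℤ, νr s * Real.exp (-ε * (s : ℝ))) - 1))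
          - Real.exp (-ε * ((s : ℝ) + (v : ℝ)))) 0)
        + ((∑' s : ℤ, νr s * Real.exp (-ε * (s : ℝ))) - 1) / 2 * Real.exp (-ε * (v : ℝ))
      ≤ max ((2 * ((∑' s : ℤ, νr s * Real.exp (-(2*ε) * (s : ℝ))) + 1)
          / ((∑' s : ℤ, νr s * Real.exp (-ε * (s : ℝ))) - 1))
          - Real.exp (-ε * (v : ℝ))) 0 := by
  set Mr : ℝ := ∑' s : ℤ, νr s * Real.exp (-(2*ε) * (s : ℝ)) with hMr
  set χr : ℝ := ∑' s : ℤ, νr s * Real.exp (-ε * (s : ℝ)) with hχr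
  have hMnn : 0 ≤ Mr := tsum_nonneg (fun s => mul_nonneg (hνnn s) (exp_nonneg _))
  set B : ℝ := 2 * (Mr + 1) / (χr - 1) with hB
  set c : ℝ := (χr - 1) / 2 with hc
  have hχ1 : 0 < χr - 1 := by linarith
  have hB0 : 0 < B := by positivity
  have hB1 : 1 ≤ B := by
    rw [hB, le_div_iff₀ hχ1]
    nlinarith
  intro v hv
  have hvR : (1 : ℝ) ≤ (v : ℝ) := by exact_mod_cast hv
  -- pointwise bound on V
  have hVle : ∀ u : ℝ, max (B - Real.exp (-ε * u)) 0
      ≤ (B - Real.exp (-ε * u)) + (if B ≤ Real.exp (-ε * u) then Real.exp (-ε * u) else 0) := by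
    intro u
    rcases le_or_gt B (Real.exp (-ε * u)) with h | h
    · rw [if_pos h]
      apply max_le (by linarith)
      linarith
    · rw [if_neg (not_le.mpr h)]
      apply max_le (by linarith)
      linarith
  -- the two summable comparison pieces
  have hf1sum : Summable (fun s : ℤ => νr s * (B - Real.exp (-ε * ((s : ℝ) + (v : ℝ))))) := by
    have : (fun s : ℤ => νr s * (B - Real.exp (-ε * ((s : ℝ) + (v : ℝ)))))
        = fun s : ℤ => νr s * B - (νr s * Real.exp (-ε * (s : ℝ))) * Real.exp (-ε * (v : ℝ)) := by
      funext s
      rw [show -ε * ((s : ℝ) + (v : ℝ)) = -ε * (s : ℝ) + -ε * (v : ℝ) by ring, Real.exp_add]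
      ring
    rw [this]
    exact (hνsum.mul_right B).sub (hχsum.mul_right _)
  have hf1tsum : (∑' s : ℤ, νr s * (B - Real.exp (-ε * ((s : ℝ) + (v : ℝ)))))
      = B - χr * Real.exp (-ε * (v : ℝ)) := by
    have heq : (fun s : ℤ => νr s * (B - Real.exp (-ε * ((s : ℝ) + (v : ℝ)))))
        = fun s : ℤ => νr s * B - (νr s * Real.exp (-ε * (s : ℝ))) * Real.exp (-ε * (v : ℝ)) := by
      funext s
      rw [show -ε * ((s : ℝ) + (v : ℝ)) = -ε * (s : ℝ) + -ε * (v : ℝ) by ring, Real.exp_add]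
      ring
    rw [heq, Summable.tsum_sub (hνsum.mul_right B) (hχsum.mul_right _), tsum_mul_right, tsum_mul_right,
      hν1, ← hχr]
    ring
  -- the indicator piece
  have hEv1 : Real.exp (-ε * (v : ℝ)) ≤ 1 := by
    rw [Real.exp_le_one_iff]
    nlinarith
  have hf2le : ∀ s : ℤ, νr s * (if B ≤ Real.exp (-ε * ((s : ℝ) + (v : ℝ)))
        then Real.exp (-ε * ((s : ℝ) + (v : ℝ))) else 0)
      ≤ (νr s * Real.exp (-(2*ε) * (s : ℝ))) * ((1 / B) * Real.exp (-ε * (v : ℝ))) := by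
    intro s
    rcases le_or_gt B (Real.exp (-ε * ((s : ℝ) + (v : ℝ)))) with h | h
    · rw [if_pos h]
      have e1 : Real.exp (-ε * ((s : ℝ) + (v : ℝ)))
          = Real.exp (-(2*ε) * (s : ℝ)) * (Real.exp (ε * (s : ℝ)) * Real.exp (-ε * (v : ℝ))) := by
        rw [← Real.exp_add, ← Real.exp_add]; ring_nf
      have h3 : Real.exp (ε * ((s : ℝ) + (v : ℝ))) ≤ 1 / B := by
        rw [le_div_iff₀ hB0]
        have hprod : Real.exp (ε * ((s : ℝ) + (v : ℝ))) * Real.exp (-ε * ((s : ℝ) + (v : ℝ)))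
            = 1 := by rw [← Real.exp_add]; ring_nf; exact Real.exp_zero
        nlinarith [mul_le_mul_of_nonneg_left h (Real.exp_nonneg (ε * ((s : ℝ) + (v : ℝ))))]
      have h4 : Real.exp (ε * (s : ℝ)) ≤ 1 / B := by
        have e2 : Real.exp (ε * (s : ℝ))
            = Real.exp (ε * ((s : ℝ) + (v : ℝ))) * Real.exp (-ε * (v : ℝ)) := by
          rw [← Real.exp_add]; ring_nf
        rw [e2]
        calc Real.exp (ε * ((s : ℝ) + (v : ℝ))) * Real.exp (-ε * (v : ℝ))
            ≤ (1 / B) * 1 :=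
              mul_le_mul h3 hEv1 (Real.exp_nonneg _) (one_div_nonneg.mpr hB0.le)
          _ = 1 / B := mul_one _
      have key : Real.exp (-ε * ((s : ℝ) + (v : ℝ)))
          ≤ Real.exp (-(2*ε) * (s : ℝ)) * ((1 / B) * Real.exp (-ε * (v : ℝ))) := by
        rw [e1]
        apply mul_le_mul_of_nonneg_left _ (Real.exp_nonneg _)
        exact mul_le_mul_of_nonneg_right h4 (Real.exp_nonneg _)
      calc νr s * Real.exp (-ε * ((s : ℝ) + (v : ℝ)))
          ≤ νr s * (Real.exp (-(2*ε) * (s : ℝ)) * ((1 / B) * Real.exp (-ε * (v : ℝ)))) :=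
            mul_le_mul_of_nonneg_left key (hνnn s)
        _ = (νr s * Real.exp (-(2*ε) * (s : ℝ))) * ((1 / B) * Real.exp (-ε * (v : ℝ))) := by
            ring
    · rw [if_neg (not_le.mpr h), mul_zero]
      exact mul_nonneg (mul_nonneg (hνnn s) (Real.exp_nonneg _))
        (mul_nonneg (one_div_nonneg.mpr hB0.le) (Real.exp_nonneg _))
  have hf2nn : ∀ s : ℤ, 0 ≤ νr s * (if B ≤ Real.exp (-ε * ((s : ℝ) + (v : ℝ)))
      then Real.exp (-ε * ((s : ℝ) + (v : ℝ))) else 0) := by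
    intro s
    apply mul_nonneg (hνnn s)
    split <;> [exact Real.exp_nonneg _; exact le_refl 0]
  have hf2sum : Summable (fun s : ℤ => νr s * (if B ≤ Real.exp (-ε * ((s : ℝ) + (v : ℝ)))
      then Real.exp (-ε * ((s : ℝ) + (v : ℝ))) else 0)) :=
    Summable.of_nonneg_of_le hf2nn hf2le (hMsum.mul_right _)
  have hf2tsum : (∑' s : ℤ, νr s * (if B ≤ Real.exp (-ε * ((s : ℝ) + (v : ℝ)))
      then Real.exp (-ε * ((s : ℝ) + (v : ℝ))) else 0))
      ≤ Mr * ((1 / B) * Real.exp (-ε * (v : ℝ))) := by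
    calc _ ≤ ∑' s : ℤ, (νr s * Real.exp (-(2*ε) * (s : ℝ))) * ((1 / B) * Real.exp (-ε * (v : ℝ))) :=
          Summable.tsum_le_tsum hf2le hf2sum (hMsum.mul_right _)
      _ = Mr * ((1 / B) * Real.exp (-ε * (v : ℝ))) := tsum_mul_right
  -- summability of the LHS
  have hVB : ∀ u : ℝ, max (B - Real.exp (-ε * u)) 0 ≤ B := by
    intro u
    exact max_le (by linarith [Real.exp_nonneg (-ε * u)]) hB0.le
  have hLsum : Summable (fun s : ℤ => νr s * max (B - Real.exp (-ε * ((s : ℝ) + (v : ℝ)))) 0) :=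
    Summable.of_nonneg_of_le
      (fun s => mul_nonneg (hνnn s) (le_max_right _ _))
      (fun s => mul_le_mul_of_nonneg_left (hVB _) (hνnn s))
      (hνsum.mul_right B)
  -- combine
  have hmain : (∑' s : ℤ, νr s * max (B - Real.exp (-ε * ((s : ℝ) + (v : ℝ)))) 0)
      ≤ (B - χr * Real.exp (-ε * (v : ℝ))) + Mr * ((1 / B) * Real.exp (-ε * (v : ℝ))) := by
    have hpt : ∀ s : ℤ, νr s * max (B - Real.exp (-ε * ((s : ℝ) + (v : ℝ)))) 0
        ≤ νr s * (B - Real.exp (-ε * ((s : ℝ) + (v : ℝ))))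
          + νr s * (if B ≤ Real.exp (-ε * ((s : ℝ) + (v : ℝ)))
              then Real.exp (-ε * ((s : ℝ) + (v : ℝ))) else 0) := by
      intro s
      rw [← mul_add]
      exact mul_le_mul_of_nonneg_left (hVle _) (hνnn s)
    calc (∑' s : ℤ, νr s * max (B - Real.exp (-ε * ((s : ℝ) + (v : ℝ)))) 0)
        ≤ ∑' s : ℤ, (νr s * (B - Real.exp (-ε * ((s : ℝ) + (v : ℝ))))
          + νr s * (if B ≤ Real.exp (-ε * ((s : ℝ) + (v : ℝ)))
              then Real.exp (-ε * ((s : ℝ) + (v : ℝ))) else 0)) :=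
          Summable.tsum_le_tsum hpt hLsum (hf1sum.add hf2sum)
      _ = (∑' s : ℤ, νr s * (B - Real.exp (-ε * ((s : ℝ) + (v : ℝ)))))
          + ∑' s : ℤ, νr s * (if B ≤ Real.exp (-ε * ((s : ℝ) + (v : ℝ)))
              then Real.exp (-ε * ((s : ℝ) + (v : ℝ))) else 0) := Summable.tsum_add hf1sum hf2sum
      _ ≤ (B - χr * Real.exp (-ε * (v : ℝ))) + Mr * ((1 / B) * Real.exp (-ε * (v : ℝ))) := by
          rw [hf1tsum]
          exact add_le_add_right hf2tsum _
  -- final arithmetic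
  have h1B : 1 / B = (χr - 1) / (2 * (Mr + 1)) := by
    rw [hB, one_div_div]
  have hMrB : Mr * (1 / B) ≤ (χr - 1) / 2 := by
    rw [h1B, ← mul_div_assoc, div_le_div_iff₀ (by positivity) two_pos]
    nlinarith
  have hmaxv : max (B - Real.exp (-ε * (v : ℝ))) 0 = B - Real.exp (-ε * (v : ℝ)) :=
    max_eq_left (by linarith)
  rw [hmaxv]
  have hEnn : 0 ≤ Real.exp (-ε * (v : ℝ)) := Real.exp_nonneg _
  have hcoef : (Mr * (1 / B) + c + 1) * Real.exp (-ε * (v : ℝ)) ≤ χr * Real.exp (-ε * (v : ℝ)) := by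
    apply mul_le_mul_of_nonneg_right _ hEnn
    rw [hc]; linarith
  nlinarith [hmain, hcoef]

/-- **Lemma 3.1.**  For a random walk `(ξ(t))` on `ℤ` with zero mean and
translation-invariant transition probabilities `P(x,x') = P(0,x'−x)` such that for some
`δ > 0`, `∑_x e^{−δx} P(0,x) < ∞` and `∑_x |x| P(0,x) < ∞`, the function
`f(x) = E_x(|ξ(T₀)|)` with `T₀ = inf{t ≥ 0 : ξ(t) ≤ 0}` is finite everywhere on `ℕ*`. -/
theorem overshoot_finite_expectation
    (ν : ℤ → ℝ≥0∞) (hprob : ∑' x : ℤ, ν x = 1)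
    (hmean_summable : Summable (fun x : ℤ => (x : ℝ) * (ν x).toReal))
    (hmean : ∑' x : ℤ, (x : ℝ) * (ν x).toReal = 0)
    (hexp : ∃ δ : ℝ, 0 < δ ∧
      (∑' x : ℤ, ν x * ENNReal.ofReal (Real.exp (-δ * (x : ℝ)))) < ⊤)
    (habs : (∑' x : ℤ, ν x * ENNReal.ofReal |(x : ℝ)|) < ⊤) :
    ∀ x : ℤ, 0 < x →
      (∑' w : ℤ, exitK ν {y : ℤ | 0 < y} x w * ENNReal.ofReal |(w : ℝ)|) < ⊤ := by
  obtain ⟨δ0, hδ0, hexpfin⟩ := hexp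
  intro x hx
  set A : Set ℤ := {y : ℤ | 0 < y} with hA
  by_cases hdeg : ∀ s : ℤ, s ≠ 0 → ν s = 0
  · -- degenerate case: the walk never moves, exitK vanishes
    have hzero : ∀ w : ℤ, exitK ν A x w = 0 := by
      intro w
      simp only [exitK]
      by_cases hw : w ∈ Aᶜ
      · rw [Set.indicator_of_mem hw]
        rw [ENNReal.tsum_eq_zero]
        intro n
        rw [ENNReal.tsum_eq_zero]
        intro v
        by_cases hp : nstepK ν A n x v = 0
        · rw [hp, zero_mul]
        · have hvx : v = x := nstepK_deg ν hdeg n v hp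
          subst hvx
          have hwv : w - v ≠ 0 := by
            have hw0 : ¬ 0 < w := hw
            omega
          rw [hdeg _ hwv, mul_zero]
      · exact Set.indicator_of_notMem hw _
    simp only [hzero, zero_mul, tsum_zero]
    exact ENNReal.zero_lt_top
  · -- nondegenerate case
    push_neg at hdeg
    obtain ⟨s₀, hs₀ne, hs₀⟩ := hdeg
    -- basic facts about ν
    have hνne : ∀ s : ℤ, ν s ≠ ⊤ := fun s =>
      ne_of_lt (lt_of_le_of_lt (hprob ▸ ENNReal.le_tsum s) ENNReal.one_lt_top)
    have hνsum : Summable (fun s : ℤ => (ν s).toReal) :=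
      ENNReal.summable_toReal (by rw [hprob]; exact ENNReal.one_ne_top)
    have hν1 : (∑' s : ℤ, (ν s).toReal) = 1 := by
      rw [← ENNReal.tsum_toReal_eq hνne, hprob, ENNReal.toReal_one]
    -- the exponent
    set ε : ℝ := δ0 / 2 with hεdef
    have hε : 0 < ε := by positivity
    have h2ε : -(2*ε) = -δ0 := by rw [hεdef]; ring
    have hMfin : (∑' s : ℤ, ν s * ENNReal.ofReal (Real.exp (-(2*ε) * (s : ℝ)))) < ⊤ := by
      rw [h2ε]; exact hexpfin
    set M : ℝ≥0∞ := ∑' s : ℤ, ν s * ENNReal.ofReal (Real.exp (-(2*ε) * (s : ℝ))) with hMdef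
    have hMne' : ∀ s : ℤ, ν s * ENNReal.ofReal (Real.exp (-(2*ε) * (s : ℝ))) ≠ ⊤ :=
      fun s => ENNReal.mul_ne_top (hνne s) ENNReal.ofReal_ne_top
    have hMsum : Summable (fun s : ℤ => (ν s).toReal * Real.exp (-(2*ε) * (s : ℝ))) := by
      have := ENNReal.summable_toReal (f := fun s : ℤ =>
        ν s * ENNReal.ofReal (Real.exp (-(2*ε) * (s : ℝ)))) hMfin.ne
      refine this.congr fun s => ?_
      rw [ENNReal.toReal_mul, ENNReal.toReal_ofReal (Real.exp_nonneg _)]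
    have hMval : (∑' s : ℤ, (ν s).toReal * Real.exp (-(2*ε) * (s : ℝ))) = M.toReal := by
      rw [hMdef, ENNReal.tsum_toReal_eq hMne']
      exact tsum_congr fun s => by
        rw [ENNReal.toReal_mul, ENNReal.toReal_ofReal (Real.exp_nonneg _)]
    -- comparison for the ε-exponential moment
    have hcomp : ∀ s : ℤ, Real.exp (-ε * (s : ℝ)) ≤ 1 + Real.exp (-(2*ε) * (s : ℝ)) := by
      intro s
      rcases le_or_gt 0 (s : ℝ) with hs | hs
      · have h1 : Real.exp (-ε * (s : ℝ)) ≤ 1 := by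
          rw [Real.exp_le_one_iff]
          nlinarith
        linarith [Real.exp_nonneg (-(2*ε) * (s : ℝ))]
      · have h1 : Real.exp (-ε * (s : ℝ)) ≤ Real.exp (-(2*ε) * (s : ℝ)) := by
          rw [Real.exp_le_exp]
          nlinarith
        linarith
    have hptχ : ∀ s : ℤ, (ν s).toReal * Real.exp (-ε * (s : ℝ))
        ≤ (ν s).toReal + (ν s).toReal * Real.exp (-(2*ε) * (s : ℝ)) := by
      intro s
      have := mul_le_mul_of_nonneg_left (hcomp s) (ENNReal.toReal_nonneg (a := ν s))
      nlinarith [this]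
    have hχsum : Summable (fun s : ℤ => (ν s).toReal * Real.exp (-ε * (s : ℝ))) :=
      Summable.of_nonneg_of_le
        (fun s => mul_nonneg ENNReal.toReal_nonneg (Real.exp_nonneg _))
        hptχ (hνsum.add hMsum)
    have hχle : (∑' s : ℤ, (ν s).toReal * Real.exp (-ε * (s : ℝ)))
        ≤ 1 + ∑' s : ℤ, (ν s).toReal * Real.exp (-(2*ε) * (s : ℝ)) := by
      calc (∑' s : ℤ, (ν s).toReal * Real.exp (-ε * (s : ℝ)))
          ≤ ∑' s : ℤ, ((ν s).toReal + (ν s).toReal * Real.exp (-(2*ε) * (s : ℝ))) :=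
            Summable.tsum_le_tsum hptχ hχsum (hνsum.add hMsum)
        _ = 1 + ∑' s : ℤ, (ν s).toReal * Real.exp (-(2*ε) * (s : ℝ)) := by
            rw [Summable.tsum_add hνsum hMsum, hν1]
    -- strict inequality χ > 1 from zero mean and nondegeneracy
    have hs₀pos : 0 < (ν s₀).toReal := ENNReal.toReal_pos hs₀ (hνne s₀)
    set η : ℝ := (ν s₀).toReal * (Real.exp (-ε * (s₀ : ℝ)) - (1 - ε * (s₀ : ℝ))) with hηdef
    have hη : 0 < η := by
      apply mul_pos hs₀pos
      have hne : -ε * (s₀ : ℝ) ≠ 0 :=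
        mul_ne_zero (neg_ne_zero.mpr hε.ne') (Int.cast_ne_zero.mpr hs₀ne)
      have := Real.add_one_lt_exp hne
      linarith
    have hχgt : 1 < ∑' s : ℤ, (ν s).toReal * Real.exp (-ε * (s : ℝ)) := by
      have hsumL : Summable (fun s : ℤ =>
          ((ν s).toReal - ε * ((s : ℝ) * (ν s).toReal)) + (if s = s₀ then η else 0)) :=
        (hνsum.sub (hmean_summable.mul_left ε)).add (hasSum_ite_eq s₀ η).summable
      have hpt : ∀ s : ℤ,
          ((ν s).toReal - ε * ((s : ℝ) * (ν s).toReal)) + (if s = s₀ then η else 0)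
          ≤ (ν s).toReal * Real.exp (-ε * (s : ℝ)) := by
        intro s
        by_cases hss : s = s₀
        · subst hss
          rw [if_pos rfl, hηdef]
          have : (ν s).toReal - ε * ((s : ℝ) * (ν s).toReal)
              + (ν s).toReal * (Real.exp (-ε * (s : ℝ)) - (1 - ε * (s : ℝ)))
              = (ν s).toReal * Real.exp (-ε * (s : ℝ)) := by ring
          linarith [this.le]
        · rw [if_neg hss, add_zero]
          have h1 : (1 : ℝ) - ε * (s : ℝ) ≤ Real.exp (-ε * (s : ℝ)) := by
            have := Real.add_one_le_exp (-ε * (s : ℝ))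
            linarith
          have := mul_le_mul_of_nonneg_left h1 (ENNReal.toReal_nonneg (a := ν s))
          nlinarith [this]
      have hval : (∑' s : ℤ,
          (((ν s).toReal - ε * ((s : ℝ) * (ν s).toReal)) + (if s = s₀ then η else 0)))
          = 1 + η := by
        rw [Summable.tsum_add (hνsum.sub (hmean_summable.mul_left ε)) (hasSum_ite_eq s₀ η).summable,
          Summable.tsum_sub hνsum (hmean_summable.mul_left ε), hν1,
          tsum_mul_left, hmean, (hasSum_ite_eq s₀ η).tsum_eq]
        ring
      have := Summable.tsum_le_tsum hpt hsumL hχsum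
      rw [hval] at this
      linarith
    -- name the constants
    set χr : ℝ := ∑' s : ℤ, (ν s).toReal * Real.exp (-ε * (s : ℝ)) with hχrdef
    set Mr : ℝ := ∑' s : ℤ, (ν s).toReal * Real.exp (-(2*ε) * (s : ℝ)) with hMrdef
    set B : ℝ := 2 * (Mr + 1) / (χr - 1) with hBdef
    set c : ℝ := (χr - 1) / 2 with hcdef
    have hχ1 : 0 < χr - 1 := by linarith
    have hMnn : 0 ≤ Mr := tsum_nonneg fun s =>
      mul_nonneg ENNReal.toReal_nonneg (Real.exp_nonneg _)
    have hB0 : 0 < B := by positivity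
    have hc0 : 0 < c := by positivity
    set Vr : ℤ → ℝ := fun u => max (B - Real.exp (-ε * (u : ℝ))) 0 with hVrdef
    set VE : ℤ → ℝ≥0∞ := fun u => ENNReal.ofReal (Vr u) with hVEdef
    set eE : ℤ → ℝ≥0∞ := fun v => ENNReal.ofReal (Real.exp (-ε * (v : ℝ))) with heEdef
    have hVrB : ∀ u : ℤ, Vr u ≤ B := fun u =>
      max_le (by linarith [Real.exp_nonneg (-ε * (u : ℝ))]) hB0.le
    have hVrnn : ∀ u : ℤ, 0 ≤ Vr u := fun u => le_max_right _ _
    -- the ENNReal drift inequality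
    have hdriftE : ∀ v : ℤ, 1 ≤ v →
        (∑' s : ℤ, ν s * VE (s + v)) + ENNReal.ofReal c * eE v ≤ VE v := by
      intro v hv
      have hdR := real_drift (fun s => (ν s).toReal) (fun s => ENNReal.toReal_nonneg)
        hνsum hν1 ε hε hMsum hχsum hχgt hχle v hv
      have hVsum : Summable (fun s : ℤ => (ν s).toReal * Vr (s + v)) :=
        Summable.of_nonneg_of_le
          (fun s => mul_nonneg ENNReal.toReal_nonneg (hVrnn _))
          (fun s => mul_le_mul_of_nonneg_left (hVrB _) ENNReal.toReal_nonneg)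
          (hνsum.mul_right B)
      have hconv : (∑' s : ℤ, ν s * VE (s + v))
          = ENNReal.ofReal (∑' s : ℤ, (ν s).toReal * Vr (s + v)) := by
        rw [ENNReal.ofReal_tsum_of_nonneg
          (fun s => mul_nonneg ENNReal.toReal_nonneg (hVrnn _)) hVsum]
        refine tsum_congr fun s => ?_
        rw [ENNReal.ofReal_mul ENNReal.toReal_nonneg, ENNReal.ofReal_toReal (hνne s)]
      rw [hconv, heEdef]
      rw [← ENNReal.ofReal_mul hc0.le,
        ← ENNReal.ofReal_add (tsum_nonneg fun s =>
          mul_nonneg ENNReal.toReal_nonneg (hVrnn _)) (by positivity)]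
      apply ENNReal.ofReal_le_ofReal
      have hVcast : ∀ s : ℤ, Vr (s + v) = max (B - Real.exp (-ε * ((s : ℝ) + (v : ℝ)))) 0 := by
        intro s
        rw [hVrdef]
        push_cast
        ring_nf
      calc (∑' s : ℤ, (ν s).toReal * Vr (s + v)) + c * Real.exp (-ε * (v : ℝ))
          = (∑' s : ℤ, (ν s).toReal
              * max (B - Real.exp (-ε * ((s : ℝ) + (v : ℝ)))) 0)
            + c * Real.exp (-ε * (v : ℝ)) := by
            rw [tsum_congr fun s => by rw [hVcast s]]
        _ ≤ max (B - Real.exp (-ε * (v : ℝ))) 0 := hdR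
        _ = Vr v := rfl
    -- supermartingale iteration
    have hsupp : ∀ (n : ℕ) (v : ℤ), nstepK ν A n x v ≠ 0 → 1 ≤ v := by
      intro n v h
      have := nstepK_pos_supp ν hx n v h
      omega
    have htrans : ∀ v : ℤ, (∑' u : ℤ, ν (u - v) * VE u) = ∑' s : ℤ, ν s * VE (s + v) := by
      intro v
      have := (Equiv.addRight v).tsum_eq (fun u => ν (u - v) * VE u)
      simp only [Equiv.coe_addRight, add_sub_cancel_right] at this
      exact this.symm
    have hrec : ∀ n : ℕ,
        (∑' v : ℤ, nstepK ν A (n+1) x v * VE v)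
          + ENNReal.ofReal c * (∑' v : ℤ, nstepK ν A n x v * eE v)
        ≤ ∑' v : ℤ, nstepK ν A n x v * VE v := by
      intro n
      have hstep : (∑' v : ℤ, nstepK ν A (n+1) x v * VE v)
          ≤ ∑' v : ℤ, nstepK ν A n x v * (∑' s : ℤ, ν s * VE (s + v)) := by
        calc (∑' u : ℤ, nstepK ν A (n+1) x u * VE u)
            ≤ ∑' u : ℤ, (∑' v : ℤ, nstepK ν A n x v * ν (u - v)) * VE u := by
              apply ENNReal.tsum_le_tsum
              intro u
              apply mul_le_mul_left
              simp only [nstepK]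
              exact Set.indicator_le_self' (fun _ _ => zero_le) u
          _ = ∑' u : ℤ, ∑' v : ℤ, (nstepK ν A n x v * ν (u - v)) * VE u := by
              exact tsum_congr fun u => (ENNReal.tsum_mul_right).symm
          _ = ∑' v : ℤ, ∑' u : ℤ, (nstepK ν A n x v * ν (u - v)) * VE u := ENNReal.tsum_comm
          _ = ∑' v : ℤ, nstepK ν A n x v * (∑' u : ℤ, ν (u - v) * VE u) := by
              refine tsum_congr fun v => ?_
              rw [← ENNReal.tsum_mul_left]
              exact tsum_congr fun u => by ring
          _ = ∑' v : ℤ, nstepK ν A n x v * (∑' s : ℤ, ν s * VE (s + v)) :=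
              tsum_congr fun v => by rw [htrans v]
      calc (∑' v : ℤ, nstepK ν A (n+1) x v * VE v)
            + ENNReal.ofReal c * (∑' v : ℤ, nstepK ν A n x v * eE v)
          ≤ (∑' v : ℤ, nstepK ν A n x v * (∑' s : ℤ, ν s * VE (s + v)))
            + ∑' v : ℤ, nstepK ν A n x v * (ENNReal.ofReal c * eE v) := by
            apply add_le_add hstep
            rw [← ENNReal.tsum_mul_left]
            exact le_of_eq (tsum_congr fun v => by ring)
        _ = ∑' v : ℤ, (nstepK ν A n x v * (∑' s : ℤ, ν s * VE (s + v))
            + nstepK ν A n x v * (ENNReal.ofReal c * eE v)) := ENNReal.tsum_add.symm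
        _ ≤ ∑' v : ℤ, nstepK ν A n x v * VE v := by
            apply ENNReal.tsum_le_tsum
            intro v
            by_cases hp : nstepK ν A n x v = 0
            · simp [hp]
            · rw [← mul_add]
              exact mul_le_mul_right (hdriftE v (hsupp n v hp)) _
    have hGN0 : (∑' v : ℤ, nstepK ν A 0 x v * VE v) = VE x := by
      rw [tsum_eq_single x (fun b hb => by simp [nstepK, hb])]
      simp [nstepK]
    have hiter : ∀ n : ℕ,
        (∑' v : ℤ, nstepK ν A n x v * VE v)
          + ENNReal.ofReal c * (∑ k ∈ Finset.range n, ∑' v : ℤ, nstepK ν A k x v * eE v)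
        ≤ VE x := by
      intro n
      induction n with
      | zero => simp [hGN0]
      | succ n ih =>
        calc (∑' v : ℤ, nstepK ν A (n+1) x v * VE v)
            + ENNReal.ofReal c
              * (∑ k ∈ Finset.range (n+1), ∑' v : ℤ, nstepK ν A k x v * eE v)
            = ((∑' v : ℤ, nstepK ν A (n+1) x v * VE v)
              + ENNReal.ofReal c * (∑' v : ℤ, nstepK ν A n x v * eE v))
              + ENNReal.ofReal c
                * (∑ k ∈ Finset.range n, ∑' v : ℤ, nstepK ν A k x v * eE v) := by
              rw [Finset.sum_range_succ, mul_add]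
              ring
          _ ≤ (∑' v : ℤ, nstepK ν A n x v * VE v)
              + ENNReal.ofReal c
                * (∑ k ∈ Finset.range n, ∑' v : ℤ, nstepK ν A k x v * eE v) :=
              add_le_add_left (hrec n) _
          _ ≤ VE x := ih
    have hVEB : VE x ≤ ENNReal.ofReal B := ENNReal.ofReal_le_ofReal (hVrB x)
    have hWlt : (∑' n : ℕ, ∑' v : ℤ, nstepK ν A n x v * eE v) < ⊤ := by
      rcases eq_or_ne (∑' n : ℕ, ∑' v : ℤ, nstepK ν A n x v * eE v) ⊤ with htop | htop
      · exfalso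
        have hle : ∀ n : ℕ, ENNReal.ofReal c
            * (∑ k ∈ Finset.range n, ∑' v : ℤ, nstepK ν A k x v * eE v)
            ≤ ENNReal.ofReal B :=
          fun n => le_trans (le_add_self) ((hiter n).trans hVEB)
        have h2 : ENNReal.ofReal c * (∑' n : ℕ, ∑' v : ℤ, nstepK ν A n x v * eE v)
            ≤ ENNReal.ofReal B := by
          rw [ENNReal.tsum_eq_iSup_nat, ENNReal.mul_iSup]
          exact iSup_le hle
        rw [htop, ENNReal.mul_top (by simp [ENNReal.ofReal_eq_zero]; linarith)] at h2
        exact (lt_irrefl ⊤ (lt_of_le_of_lt h2 ENNReal.ofReal_lt_top))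
      · exact lt_top_iff_ne_top.mpr htop
    -- final chain
    have hterm : ∀ w : ℤ, exitK ν A x w * ENNReal.ofReal |(w : ℝ)|
        ≤ ∑' n : ℕ, ∑' v : ℤ, (ENNReal.ofReal (1/ε) * (nstepK ν A n x v * eE v))
          * (ν (w - v) * ENNReal.ofReal (Real.exp (-(2*ε) * ((w - v : ℤ) : ℝ)))) := by
      intro w
      by_cases hw : w ∈ Aᶜ
      · have hw0 : (w : ℝ) ≤ 0 := by
          have : ¬ (0 < w) := hw
          exact_mod_cast (by omega : w ≤ (0 : ℤ))
        simp only [exitK]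
        rw [Set.indicator_of_mem hw, ← ENNReal.tsum_mul_right]
        apply ENNReal.tsum_le_tsum
        intro n
        rw [← ENNReal.tsum_mul_right]
        apply ENNReal.tsum_le_tsum
        intro v
        by_cases hp : nstepK ν A n x v = 0
        · simp [hp]
        · have hv : (1 : ℝ) ≤ (v : ℝ) := by exact_mod_cast hsupp n v hp
          have hreal : |(w : ℝ)| ≤ (1/ε) * Real.exp (-ε * (v : ℝ))
              * Real.exp (-(2*ε) * ((w - v : ℤ) : ℝ)) := by
            have hcast : ((w - v : ℤ) : ℝ) = (w : ℝ) - (v : ℝ) := by push_cast; ring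
            rw [hcast]
            set t : ℝ := (w : ℝ) - (v : ℝ) with htdef
            have ht : t ≤ -(v : ℝ) := by rw [htdef]; linarith
            have habs : |(w : ℝ)| ≤ -t := by
              rw [abs_of_nonpos hw0]
              rw [htdef]; linarith
            have h1 : -t ≤ (1/ε) * Real.exp (-ε * t) := by
              have h2 : ε * (-t) ≤ Real.exp (-ε * t) := by
                have := Real.add_one_le_exp (-ε * t)
                nlinarith [Real.exp_nonneg (-ε * t)]
              calc -t = (1/ε) * (ε * (-t)) := by field_simp
                _ ≤ (1/ε) * Real.exp (-ε * t) :=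
                  mul_le_mul_of_nonneg_left h2 (by positivity)
            have h3 : Real.exp (-ε * t) ≤ Real.exp (-(2*ε) * t) * Real.exp (-ε * (v : ℝ)) := by
              rw [← Real.exp_add, Real.exp_le_exp]
              nlinarith
            calc |(w : ℝ)| ≤ -t := habs
              _ ≤ (1/ε) * Real.exp (-ε * t) := h1
              _ ≤ (1/ε) * (Real.exp (-(2*ε) * t) * Real.exp (-ε * (v : ℝ))) :=
                mul_le_mul_of_nonneg_left h3 (by positivity)
              _ = (1/ε) * Real.exp (-ε * (v : ℝ)) * Real.exp (-(2*ε) * t) := by ring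
          calc nstepK ν A n x v * ν (w - v) * ENNReal.ofReal |(w : ℝ)|
              ≤ nstepK ν A n x v * ν (w - v)
                * (ENNReal.ofReal (1/ε) * ENNReal.ofReal (Real.exp (-ε * (v : ℝ)))
                  * ENNReal.ofReal (Real.exp (-(2*ε) * ((w - v : ℤ) : ℝ)))) := by
                apply mul_le_mul_right
                rw [← ENNReal.ofReal_mul (by positivity), ← ENNReal.ofReal_mul (by positivity)]
                exact ENNReal.ofReal_le_ofReal hreal
            _ = (ENNReal.ofReal (1/ε) * (nstepK ν A n x v * eE v))
                * (ν (w - v) * ENNReal.ofReal (Real.exp (-(2*ε) * ((w - v : ℤ) : ℝ)))) := by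
                rw [heEdef]
                ring
      · simp only [exitK]
        rw [Set.indicator_of_notMem hw, zero_mul]
        exact zero_le
    calc (∑' w : ℤ, exitK ν A x w * ENNReal.ofReal |(w : ℝ)|)
        ≤ ∑' w : ℤ, ∑' n : ℕ, ∑' v : ℤ,
            (ENNReal.ofReal (1/ε) * (nstepK ν A n x v * eE v))
            * (ν (w - v) * ENNReal.ofReal (Real.exp (-(2*ε) * ((w - v : ℤ) : ℝ)))) :=
          ENNReal.tsum_le_tsum hterm
      _ = ∑' n : ℕ, ∑' w : ℤ, ∑' v : ℤ,
            (ENNReal.ofReal (1/ε) * (nstepK ν A n x v * eE v))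
            * (ν (w - v) * ENNReal.ofReal (Real.exp (-(2*ε) * ((w - v : ℤ) : ℝ)))) :=
          ENNReal.tsum_comm
      _ = ∑' n : ℕ, ∑' v : ℤ, ∑' w : ℤ,
            (ENNReal.ofReal (1/ε) * (nstepK ν A n x v * eE v))
            * (ν (w - v) * ENNReal.ofReal (Real.exp (-(2*ε) * ((w - v : ℤ) : ℝ)))) :=
          tsum_congr fun n => ENNReal.tsum_comm
      _ = ∑' n : ℕ, ∑' v : ℤ,
            (ENNReal.ofReal (1/ε) * (nstepK ν A n x v * eE v)) * M := by
          refine tsum_congr fun n => tsum_congr fun v => ?_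
          rw [ENNReal.tsum_mul_left]
          congr 1
          have := (Equiv.subRight v).tsum_eq
            (fun s : ℤ => ν s * ENNReal.ofReal (Real.exp (-(2*ε) * (s : ℝ))))
          simp only [Equiv.subRight_apply] at this
          rw [← hMdef] at this
          exact this
      _ = (ENNReal.ofReal (1/ε) * M) * ∑' n : ℕ, ∑' v : ℤ, nstepK ν A n x v * eE v := by
          rw [← ENNReal.tsum_mul_left]
          refine tsum_congr fun n => ?_
          rw [← ENNReal.tsum_mul_left]
          exact tsum_congr fun v => by ring
      _ < ⊤ := ENNReal.mul_lt_top
          (ENNReal.mul_lt_top ENNReal.ofReal_lt_top hMfin) hWlt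

end KRWQ
end
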